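/- arXiv:2101.04671 — 3 statements merged into one kernel-verified Lean document; each statement's English description precedes it below -/
import Mathlib

section
/- The pair (Δ, √V) is a canonical pair; that is, for every λ ∈ ℝ one has E[exp(λ·Δ − (λ²/2)·V)] ≤ 1. -/
open MeasureTheory ProbabilityTheory Real ENNReal Finset

variable {Ω 𝒵 : Type*} [MeasurableSpace Ω] [MeasurableSpace 𝒵]

/-- The sample `S = (Z_1, …, Z_n)` viewed as a map `Ω → 𝒵ⁿ`. -/
def sample (n : ℕ) (Z : Fin n → Ω → 𝒵) (ω : Ω) : Fin n → 𝒵 := fun i => Z i ω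

/-- `S^{(k)}`: the sample with its `k`-th coordinate replaced by `Z'_k`. -/
def sampleRep (n : ℕ) (Z Z' : Fin n → Ω → 𝒵) (k : Fin n) (ω : Ω) : Fin n → 𝒵 :=
  Function.update (sample n Z ω) k (Z' k ω)

/-- The σ-algebra generated by `Z_1, …, Z_m` (i.e. by the `Z_i` with `i < m`). -/
def filt (n : ℕ) (Z : Fin n → Ω → 𝒵) (m : ℕ) : MeasurableSpace Ω :=
  ⨆ i : Fin n, ⨆ _ : (i : ℕ) < m, MeasurableSpace.comap (Z i) inferInstance

/-- The gap `Δ = f(S) − E[f(S)]`. -/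
noncomputable def gap (P : Measure Ω) (n : ℕ) (Z : Fin n → Ω → 𝒵)
    (f : (Fin n → 𝒵) → ℝ) (ω : Ω) : ℝ :=
  f (sample n Z ω) - ∫ ω', f (sample n Z ω') ∂P

/-- The semi-empirical variance estimator
`V = Σ_{k=1}^n E[(f(S) − f(S^{(k)}))² | Z_1, …, Z_k]`. -/
noncomputable def varEst (P : Measure Ω) (n : ℕ) (Z Z' : Fin n → Ω → 𝒵)
    (f : (Fin n → 𝒵) → ℝ) (ω : Ω) : ℝ :=
  ∑ k : Fin n,
    (P[fun ω' => (f (sample n Z ω') - f (sampleRep n Z Z' k ω')) ^ 2 |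
      filt n Z (k + 1)]) ω




section PatchSwap
variable {ι 𝒵 : Type*} [Fintype ι] [DecidableEq ι] [MeasurableSpace 𝒵]
  (μ : ι → Measure 𝒵) [∀ i, IsProbabilityMeasure (μ i)]

/-- combine two vectors: coordinates in `A` from `x`, the rest from `y`. -/
def patch (A : Finset ι) (x y : ι → 𝒵) : ι → 𝒵 := fun j => if j ∈ A then x j else y j

lemma measurable_patch (A : Finset ι) :
    Measurable (fun p : (ι → 𝒵) × (ι → 𝒵) => patch A p.1 p.2) := by
  apply measurable_pi_lambda
  intro j
  unfold patch
  split_ifs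
  · exact (measurable_pi_apply j).comp measurable_fst
  · exact (measurable_pi_apply j).comp measurable_snd

lemma map_patch (A : Finset ι) :
    ((Measure.pi μ).prod (Measure.pi μ)).map (fun p => patch A p.1 p.2) = Measure.pi μ := by
  refine (Measure.pi_eq fun s hs => ?_).symm
  rw [Measure.map_apply (measurable_patch A) (MeasurableSet.univ_pi hs)]
  have hpre : (fun p : (ι → 𝒵) × (ι → 𝒵) => patch A p.1 p.2) ⁻¹' Set.pi Set.univ s =
      (Set.pi Set.univ fun j => if j ∈ A then s j else Set.univ) ×ˢ
      (Set.pi Set.univ fun j => if j ∈ A then Set.univ else s j) := by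
    ext ⟨x, y⟩
    simp only [Set.mem_preimage, Set.mem_pi, Set.mem_univ, true_implies, Set.mem_prod, patch]
    constructor
    · intro h
      constructor <;> intro j <;> by_cases hj : j ∈ A <;> simp only [hj, if_true, if_false] <;>
        first | exact Set.mem_univ _ | simpa [hj] using h j
    · rintro ⟨h1, h2⟩ j
      by_cases hj : j ∈ A
      · simpa [hj] using h1 j
      · simpa [hj] using h2 j
  rw [hpre, Measure.prod_prod, Measure.pi_pi, Measure.pi_pi, ← Finset.prod_mul_distrib]
  refine Finset.prod_congr rfl fun j _ => ?_
  by_cases hj : j ∈ A <;> simp [hj, measure_univ]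

lemma map_comp_equiv (e : ι ≃ ι) (he : ∀ j, μ (e j) = μ j) :
    (Measure.pi μ).map (fun x => x ∘ e) = Measure.pi μ := by
  refine (Measure.pi_eq fun s hs => ?_).symm
  have hmeas : Measurable (fun x : ι → 𝒵 => x ∘ e) :=
    measurable_pi_lambda _ fun j => measurable_pi_apply (e j)
  rw [Measure.map_apply hmeas (MeasurableSet.univ_pi hs)]
  have hpre : (fun x : ι → 𝒵 => x ∘ e) ⁻¹' Set.pi Set.univ s =
      Set.pi Set.univ (fun j => s (e.symm j)) := by
    ext x
    simp only [Set.mem_preimage, Set.mem_pi, Set.mem_univ, true_implies, Function.comp]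
    constructor
    · intro h j
      simpa using h (e.symm j)
    · intro h j
      simpa using h (e j)
  rw [hpre, Measure.pi_pi]
  rw [← Equiv.prod_comp e (fun j => μ j (s (e.symm j)))]
  refine Finset.prod_congr rfl fun j _ => by rw [Equiv.symm_apply_apply, he]

end PatchSwap

section JointLaw
variable {Ω ι 𝒵 : Type*} [MeasurableSpace Ω] [Fintype ι] [MeasurableSpace 𝒵]

lemma map_joint_eq_pi (P : Measure Ω) [IsProbabilityMeasure P]
    (W : ι → Ω → 𝒵) (hW : ∀ j, Measurable (W j))
    (h : iIndepFun W P) :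
    P.map (fun ω j => W j ω) = Measure.pi (fun j => P.map (W j)) := by
  haveI : ∀ j, IsProbabilityMeasure (P.map (W j)) :=
    fun j => Measure.isProbabilityMeasure_map (hW j).aemeasurable
  refine (Measure.pi_eq fun s hs => ?_).symm
  rw [Measure.map_apply (measurable_pi_lambda _ fun j => hW j) (MeasurableSet.univ_pi hs)]
  have hpre : (fun ω (j : ι) => W j ω) ⁻¹' Set.pi Set.univ s = ⋂ j ∈ Finset.univ, W j ⁻¹' s j := by
    ext ω
    simp [Set.mem_pi]
  rw [hpre, iIndepFun_iff_measure_inter_preimage_eq_mul.mp h Finset.univ (fun i _ => hs i)]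
  exact Finset.prod_congr rfl fun j _ => (Measure.map_apply (hW j) (hs j)).symm

end JointLaw

section ProdSpace
variable {𝒵 : Type*} [MeasurableSpace 𝒵]

/-- indices `inl i`, `i < m`, among `Fin n ⊕ Fin n`. -/
def AA (n m : ℕ) : Finset (Fin n ⊕ Fin n) :=
  (Finset.univ.filter fun i : Fin n => (i : ℕ) < m).image Sum.inl

lemma mem_AA_inl {n m : ℕ} {i : Fin n} : Sum.inl i ∈ AA n m ↔ (i : ℕ) < m := by
  simp [AA]

lemma not_mem_AA_inr {n m : ℕ} (i : Fin n) : Sum.inr i ∉ AA n m := by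
  simp [AA]

lemma AA_mono {n m m' : ℕ} (h : m ≤ m') : AA n m ⊆ AA n m' := by
  intro j hj
  rcases j with i | i
  · exact mem_AA_inl.mpr (lt_of_lt_of_le (mem_AA_inl.mp hj) h)
  · exact absurd hj (not_mem_AA_inr i)

/-- `F(x) = f(x ∘ inl)`. -/
def FF (n : ℕ) (f : (Fin n → 𝒵) → ℝ) (x : Fin n ⊕ Fin n → 𝒵) : ℝ :=
  f fun i => x (Sum.inl i)

/-- `δ_k(x) = F(x) - F(x ∘ swap (inl k) (inr k))`. -/
def dd (n : ℕ) (f : (Fin n → 𝒵) → ℝ) (k : Fin n) (x : Fin n ⊕ Fin n → 𝒵) : ℝ :=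
  FF n f x - FF n f (x ∘ Equiv.swap (Sum.inl k) (Sum.inr k))

noncomputable def VV (n : ℕ) (pr : Measure (Fin n ⊕ Fin n → 𝒵)) (f : (Fin n → 𝒵) → ℝ)
    (k : Fin n) (x : Fin n ⊕ Fin n → 𝒵) : ℝ :=
  ∫ y, (dd n f k (patch (AA n (k + 1)) x y)) ^ 2 ∂pr

noncomputable def GG (n : ℕ) (pr : Measure (Fin n ⊕ Fin n → 𝒵)) (f : (Fin n → 𝒵) → ℝ)
    (m : ℕ) (x : Fin n ⊕ Fin n → 𝒵) : ℝ :=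
  ∫ y, FF n f (patch (AA n m) x y) ∂pr

lemma patch_patch {ι 𝒵' : Type*} [DecidableEq ι] {A B : Finset ι} (h : A ⊆ B)
    (x y y' : ι → 𝒵') : patch A (patch B x y) y' = patch A x y' := by
  funext j
  by_cases hj : j ∈ A
  · simp [patch, hj, h hj]
  · simp [patch, hj]

lemma patch_swap_left {n : ℕ} {m : ℕ} {k : Fin n} (h : m ≤ (k : ℕ))
    (x y : Fin n ⊕ Fin n → 𝒵) :
    patch (AA n m) (x ∘ Equiv.swap (Sum.inl k) (Sum.inr k)) y = patch (AA n m) x y := by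
  funext j
  by_cases hj : j ∈ AA n m
  · rcases j with i | i
    · have hik : i ≠ k := by
        have := mem_AA_inl.mp hj
        intro hik; subst hik; omega
      simp only [patch, hj, if_true, Function.comp]
      rw [Equiv.swap_apply_of_ne_of_ne (by simpa using hik) (by simp)]
    · exact absurd hj (not_mem_AA_inr i)
  · simp [patch, hj]

lemma FF_patch_full {n : ℕ} (f : (Fin n → 𝒵) → ℝ) (x y : Fin n ⊕ Fin n → 𝒵) :
    FF n f (patch (AA n n) x y) = FF n f x := by
  unfold FF
  congr 1
  funext i
  simp [patch, mem_AA_inl.mpr i.isLt]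

lemma patch_zero {n : ℕ} (x y : Fin n ⊕ Fin n → 𝒵) : patch (AA n 0) x y = y := by
  funext j
  rcases j with i | i
  · simp [patch, mem_AA_inl]
  · simp [patch, not_mem_AA_inr]

lemma dd_comp_swap {n : ℕ} (f : (Fin n → 𝒵) → ℝ) (k : Fin n) (x : Fin n ⊕ Fin n → 𝒵) :
    dd n f k (x ∘ Equiv.swap (Sum.inl k) (Sum.inr k)) = - dd n f k x := by
  have : (x ∘ Equiv.swap (Sum.inl k) (Sum.inr k)) ∘ Equiv.swap (Sum.inl k) (Sum.inr k) = x := by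
    funext j
    simp [Function.comp, Equiv.swap_apply_self]
  unfold dd
  rw [this]
  ring

/-- key identity: `F((patch (AA (m+1)) x y) ∘ swap) = F(patch (AA m) x (y ∘ swap))`
for `k` with `(k:ℕ) = m`. -/
lemma FF_patch_swap {n m : ℕ} (f : (Fin n → 𝒵) → ℝ) {k : Fin n} (hk : (k : ℕ) = m)
    (x y : Fin n ⊕ Fin n → 𝒵) :
    FF n f ((patch (AA n (m + 1)) x y) ∘ Equiv.swap (Sum.inl k) (Sum.inr k)) =
      FF n f (patch (AA n m) x (y ∘ Equiv.swap (Sum.inl k) (Sum.inr k))) := by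
  unfold FF
  congr 1
  funext i
  by_cases hik : i = k
  · subst hik
    simp only [Function.comp, Equiv.swap_apply_left, patch,
      not_mem_AA_inr, if_false, mem_AA_inl]
    rw [if_neg (by omega)]
  · have h1 : Equiv.swap (Sum.inl k) (Sum.inr k) (Sum.inl i) = Sum.inl i :=
      Equiv.swap_apply_of_ne_of_ne (by simpa using hik) (by simp)
    simp only [Function.comp, h1, patch, mem_AA_inl]
    have : ((i : ℕ) < m + 1) ↔ ((i : ℕ) < m) := by
      constructor
      · intro h
        rcases Nat.lt_succ_iff_lt_or_eq.mp h with h' | h'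
        · exact h'
        · exact absurd (Fin.ext (h'.trans hk.symm) : i = k) hik
      · omega
    by_cases him : (i : ℕ) < m
    · rw [if_pos (this.mpr him), if_pos him]
    · rw [if_neg (fun h => him (this.mp h)), if_neg him]

end ProdSpace

section Core
variable {𝒵 : Type*} [MeasurableSpace 𝒵] {n : ℕ} {f : (Fin n → 𝒵) → ℝ}

lemma measurable_patch_right {ι 𝒵' : Type*} [DecidableEq ι] [MeasurableSpace 𝒵']
    (A : Finset ι) (x : ι → 𝒵') : Measurable (fun y : ι → 𝒵' => patch A x y) := by
  apply measurable_pi_lambda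
  intro j
  unfold patch
  split_ifs
  · exact measurable_const
  · exact measurable_pi_apply j

lemma measurable_comp_equiv {ι 𝒵' : Type*} [MeasurableSpace 𝒵'] (e : ι ≃ ι) :
    Measurable (fun x : ι → 𝒵' => x ∘ e) :=
  measurable_pi_lambda _ fun j => measurable_pi_apply (e j)

lemma measurable_FF (hf : Measurable f) : Measurable (FF n f) :=
  hf.comp (measurable_pi_lambda _ fun i => measurable_pi_apply (Sum.inl i))

lemma measurable_dd (hf : Measurable f) (k : Fin n) : Measurable (dd n f k) :=
  (measurable_FF hf).sub ((measurable_FF hf).comp (measurable_comp_equiv _))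

variable (μ : Fin n ⊕ Fin n → Measure 𝒵) [∀ j, IsProbabilityMeasure (μ j)]

lemma measurable_GG (hf : Measurable f) (m : ℕ) :
    Measurable (GG n (Measure.pi μ) f m) := by
  have : StronglyMeasurable fun p : ((Fin n ⊕ Fin n) → 𝒵) × ((Fin n ⊕ Fin n) → 𝒵) =>
      FF n f (patch (AA n m) p.1 p.2) :=
    ((measurable_FF hf).comp (measurable_patch _)).stronglyMeasurable
  exact this.integral_prod_right'.measurable

lemma measurable_VV (hf : Measurable f) (k : Fin n) :
    Measurable (VV n (Measure.pi μ) f k) := by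
  have : StronglyMeasurable fun p : ((Fin n ⊕ Fin n) → 𝒵) × ((Fin n ⊕ Fin n) → 𝒵) =>
      (dd n f k (patch (AA n (k + 1)) p.1 p.2)) ^ 2 :=
    (((measurable_dd hf k).comp (measurable_patch _)).pow_const 2).stronglyMeasurable
  exact this.integral_prod_right'.measurable

lemma memLp_comp_patch (A : Finset (Fin n ⊕ Fin n)) {H : ((Fin n ⊕ Fin n) → 𝒵) → ℝ}
    (hH : Measurable H) {p : ℝ≥0∞} (h : MemLp H p (Measure.pi μ)) :
    MemLp (fun q : ((Fin n ⊕ Fin n) → 𝒵) × ((Fin n ⊕ Fin n) → 𝒵) => H (patch A q.1 q.2)) p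
      ((Measure.pi μ).prod (Measure.pi μ)) := by
  have h' : MemLp H p (((Measure.pi μ).prod (Measure.pi μ)).map
      (fun q : _ × _ => patch A q.1 q.2)) := by rw [map_patch μ A]; exact h
  exact (memLp_map_measure_iff hH.aestronglyMeasurable
    (measurable_patch A).aemeasurable).mp h'

lemma memLp_comp_equiv {e : (Fin n ⊕ Fin n) ≃ (Fin n ⊕ Fin n)} (he : ∀ j, μ (e j) = μ j)
    {H : ((Fin n ⊕ Fin n) → 𝒵) → ℝ} (hH : Measurable H) {p : ℝ≥0∞}
    (h : MemLp H p (Measure.pi μ)) :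
    MemLp (fun x => H (x ∘ e)) p (Measure.pi μ) := by
  have h' : MemLp H p ((Measure.pi μ).map (fun x => x ∘ e)) := by
    rw [map_comp_equiv μ e he]; exact h
  exact (memLp_map_measure_iff hH.aestronglyMeasurable
    (measurable_comp_equiv e).aemeasurable).mp h'

lemma lintegral_comp_equiv {e : (Fin n ⊕ Fin n) ≃ (Fin n ⊕ Fin n)} (he : ∀ j, μ (e j) = μ j)
    {H : ((Fin n ⊕ Fin n) → 𝒵) → ℝ≥0∞} (hH : Measurable H) :
    ∫⁻ x, H (x ∘ e) ∂(Measure.pi μ) = ∫⁻ x, H x ∂(Measure.pi μ) := by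
  conv_rhs => rw [← map_comp_equiv μ e he]
  rw [lintegral_map hH (measurable_comp_equiv e)]

lemma integral_comp_equiv {e : (Fin n ⊕ Fin n) ≃ (Fin n ⊕ Fin n)} (he : ∀ j, μ (e j) = μ j)
    {H : ((Fin n ⊕ Fin n) → 𝒵) → ℝ} (hH : Measurable H) :
    ∫ x, H (x ∘ e) ∂(Measure.pi μ) = ∫ x, H x ∂(Measure.pi μ) := by
  conv_rhs => rw [← map_comp_equiv μ e he]
  rw [integral_map (measurable_comp_equiv e).aemeasurable hH.aestronglyMeasurable]

lemma lintegral_comp_patch (A : Finset (Fin n ⊕ Fin n))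
    {H : ((Fin n ⊕ Fin n) → 𝒵) → ℝ≥0∞} (hH : Measurable H) :
    ∫⁻ q, H (patch A q.1 q.2) ∂((Measure.pi μ).prod (Measure.pi μ))
      = ∫⁻ x, H x ∂(Measure.pi μ) := by
  conv_rhs => rw [← map_patch μ A]
  rw [lintegral_map hH (measurable_patch A)]

end Core

/-- patch from a restricted vector. -/
def patchD {ι 𝒵' : Type*} [DecidableEq ι] (A : Finset ι) (cx : {j // j ∈ A} → 𝒵') (y : ι → 𝒵') : ι → 𝒵' :=
  fun j => if h : j ∈ A then cx ⟨j, h⟩ else y j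

lemma patchD_restrict {ι 𝒵' : Type*} [DecidableEq ι] (A : Finset ι) (x y : ι → 𝒵') :
    patchD A (fun j : {j // j ∈ A} => x j.1) y = patch A x y := by
  funext j
  by_cases h : j ∈ A <;> simp [patchD, patch, h]

lemma measurable_patchD {ι 𝒵' : Type*} [DecidableEq ι] [MeasurableSpace 𝒵'] (A : Finset ι) :
    Measurable (fun q : ({j // j ∈ A} → 𝒵') × (ι → 𝒵') => patchD A q.1 q.2) := by
  apply measurable_pi_lambda
  intro j
  unfold patchD
  by_cases h : j ∈ A
  · simp only [h, dif_pos]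
    exact (measurable_pi_apply _).comp measurable_fst
  · simp only [h, dif_neg, not_false_iff]
    exact (measurable_pi_apply _).comp measurable_snd
section Step
variable {𝒵 : Type*} [MeasurableSpace 𝒵] {n : ℕ} {f : (Fin n → 𝒵) → ℝ}
variable (μ : Fin n ⊕ Fin n → Measure 𝒵) [∀ j, IsProbabilityMeasure (μ j)]

lemma exp_sum_bound (l t : ℝ) : l * t - l ^ 2 / 2 * t ^ 2 ≤ 1 / 2 := by
  nlinarith [sq_nonneg (l * t - 1)]

set_option maxHeartbeats 2000000 in
lemma core_step (hμ : ∀ k : Fin n, μ (Sum.inr k) = μ (Sum.inl k)) (hf : Measurable f)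
    (hF2 : MemLp (FF n f) 2 (Measure.pi μ)) (l c : ℝ) {m : ℕ} (hm : m < n) :
    ∫⁻ x, ENNReal.ofReal (Real.exp (l * (GG n (Measure.pi μ) f (m + 1) x - c)
        - l ^ 2 / 2 * ∑ k ∈ Finset.univ.filter (fun k : Fin n => (k : ℕ) < m + 1),
          VV n (Measure.pi μ) f k x)) ∂(Measure.pi μ)
      ≤ ∫⁻ x, ENNReal.ofReal (Real.exp (l * (GG n (Measure.pi μ) f m x - c)
        - l ^ 2 / 2 * ∑ k ∈ Finset.univ.filter (fun k : Fin n => (k : ℕ) < m),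
          VV n (Measure.pi μ) f k x)) ∂(Measure.pi μ) := by
  set pp := Measure.pi μ with hppdef
  set k₀ : Fin n := ⟨m, hm⟩ with hk₀
  set sw := Equiv.swap (Sum.inl k₀) (Sum.inr k₀) with hsw
  have hk₀m : (k₀ : ℕ) = m := rfl
  have hswμ : ∀ j, μ (sw j) = μ j := by
    intro j
    rcases eq_or_ne j (Sum.inl k₀) with rfl | h1
    · rw [hsw, Equiv.swap_apply_left, hμ]
    rcases eq_or_ne j (Sum.inr k₀) with rfl | h2
    · rw [hsw, Equiv.swap_apply_right, hμ]
    · rw [hsw, Equiv.swap_apply_of_ne_of_ne h1 h2]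
  -- functions
  set p : ((Fin n ⊕ Fin n) → 𝒵) → ℝ := fun x => l * (GG n pp f m x - c)
      - l ^ 2 / 2 * ∑ k ∈ Finset.univ.filter (fun k : Fin n => (k : ℕ) < m), VV n pp f k x
    with hp
  set h : ((Fin n ⊕ Fin n) → 𝒵) → ℝ := fun x =>
      l * (GG n pp f (m + 1) x - GG n pp f m x) - l ^ 2 / 2 * VV n pp f k₀ x with hh
  set ψ : ((Fin n ⊕ Fin n) → 𝒵) → ℝ := fun z =>
      l * dd n f k₀ z - l ^ 2 / 2 * (dd n f k₀ z) ^ 2 with hψ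
  have hp_meas : Measurable p :=
    ((measurable_const.mul ((measurable_GG μ hf m).sub measurable_const)).sub
      (measurable_const.mul (Finset.measurable_sum _ fun k _ => measurable_VV μ hf k)))
  have hdd_meas : Measurable (dd n f k₀) := measurable_dd hf k₀
  have hψ_meas : Measurable ψ :=
    (measurable_const.mul hdd_meas).sub (measurable_const.mul (hdd_meas.pow_const 2))
  -- L² facts
  have hFr2 : MemLp (fun x => FF n f (x ∘ sw)) 2 pp :=
    memLp_comp_equiv μ hswμ (measurable_FF hf) hF2
  have hd2 : MemLp (dd n f k₀) 2 pp := hF2.sub hFr2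
  -- joint integrability
  set A' : Finset (Fin n ⊕ Fin n) := AA n (m + 1) with hA'
  have hQ2 := memLp_comp_patch μ A' (measurable_FF hf) hF2
  have hR2 := memLp_comp_patch μ A' ((measurable_FF hf).comp (measurable_comp_equiv sw)) hFr2
  have hD2 := memLp_comp_patch μ A' hdd_meas hd2
  have hQ1 : Integrable (fun q : _ × _ => FF n f (patch A' q.1 q.2)) (pp.prod pp) :=
    hQ2.integrable one_le_two
  have hR1 : Integrable (fun q : _ × _ => FF n f ((patch A' q.1 q.2) ∘ sw)) (pp.prod pp) :=
    hR2.integrable one_le_two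
  have hDsq : Integrable (fun q : _ × _ => (dd n f k₀ (patch A' q.1 q.2)) ^ 2) (pp.prod pp) :=
    hD2.integrable_sq
  -- pointwise identities
  have hVk₀ : ∀ x, VV n pp f k₀ x = ∫ y, (dd n f k₀ (patch A' x y)) ^ 2 ∂pp := fun x => rfl
  have hGsucc : ∀ x, GG n pp f (m + 1) x = ∫ y, FF n f (patch A' x y) ∂pp := fun x => rfl
  have hGm : ∀ x, GG n pp f m x = ∫ y, FF n f ((patch A' x y) ∘ sw) ∂pp := by
    intro x
    have e1 : ∀ y, FF n f ((patch A' x y) ∘ sw) = FF n f (patch (AA n m) x (y ∘ sw)) :=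
      fun y => FF_patch_swap f rfl x y
    calc GG n pp f m x = ∫ y, FF n f (patch (AA n m) x y) ∂pp := rfl
      _ = ∫ y, FF n f (patch (AA n m) x (y ∘ sw)) ∂pp :=
          (integral_comp_equiv μ hswμ (H := fun y => FF n f (patch (AA n m) x y))
            ((measurable_FF hf).comp (measurable_patch_right _ x))).symm
      _ = ∫ y, FF n f ((patch A' x y) ∘ sw) ∂pp := by simp only [e1]
  -- a.e. x: Jensen bound
  have hae : ∀ᵐ x ∂pp, ENNReal.ofReal (Real.exp (h x))
      ≤ ∫⁻ y, ENNReal.ofReal (Real.exp (ψ (patch A' x y))) ∂pp := by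
    filter_upwards [hQ1.prod_right_ae, hR1.prod_right_ae, hDsq.prod_right_ae]
      with x hq hr hdsq
    have hqr : Integrable (fun y => FF n f (patch A' x y) - FF n f ((patch A' x y) ∘ sw)) pp :=
      hq.sub hr
    have hψx : Integrable (fun y => ψ (patch A' x y)) pp := by
      have : (fun y => ψ (patch A' x y)) = fun y =>
          l * (FF n f (patch A' x y) - FF n f ((patch A' x y) ∘ sw))
          - l ^ 2 / 2 * (dd n f k₀ (patch A' x y)) ^ 2 := by
        funext y; rfl
      rw [this]
      exact (hqr.const_mul l).sub (hdsq.const_mul _)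
    have hexp : Integrable (fun y => Real.exp (ψ (patch A' x y))) pp := by
      refine (integrable_const (Real.exp (1 / 2))).mono'
        ((Real.measurable_exp.comp ((((measurable_const.mul hdd_meas).sub
          (measurable_const.mul (hdd_meas.pow_const 2))).comp
            (measurable_patch_right _ x)))).aestronglyMeasurable) ?_
      refine Filter.Eventually.of_forall fun y => ?_
      rw [Real.norm_eq_abs, abs_of_pos (Real.exp_pos _)]
      exact Real.exp_le_exp.mpr (exp_sum_bound l _)
    have hint : h x = ∫ y, ψ (patch A' x y) ∂pp := by
      have : ∫ y, ψ (patch A' x y) ∂pp =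
          l * ∫ y, (FF n f (patch A' x y) - FF n f ((patch A' x y) ∘ sw)) ∂pp
          - l ^ 2 / 2 * ∫ y, (dd n f k₀ (patch A' x y)) ^ 2 ∂pp := by
        rw [← integral_const_mul, ← integral_const_mul, ← integral_sub]
        · rfl
        · exact hqr.const_mul l
        · exact hdsq.const_mul _
      rw [this, integral_sub hq hr]
      simp only [hh]
      rw [hGsucc x, hGm x, hVk₀ x]
    have hjensen : Real.exp (h x) ≤ ∫ y, Real.exp (ψ (patch A' x y)) ∂pp := by
      rw [hint]
      have := convexOn_exp.map_integral_le Real.continuous_exp.continuousOn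
        isClosed_univ (Filter.Eventually.of_forall fun y => Set.mem_univ _) hψx ?_
      · exact this
      · exact hexp
    calc ENNReal.ofReal (Real.exp (h x))
        ≤ ENNReal.ofReal (∫ y, Real.exp (ψ (patch A' x y)) ∂pp) := ENNReal.ofReal_le_ofReal hjensen
      _ = ∫⁻ y, ENNReal.ofReal (Real.exp (ψ (patch A' x y))) ∂pp :=
          ofReal_integral_eq_lintegral_ofReal hexp
            (Filter.Eventually.of_forall fun y => (Real.exp_pos _).le)
  -- exponent splitting
  have hfilter : Finset.univ.filter (fun k : Fin n => (k : ℕ) < m + 1)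
      = insert k₀ (Finset.univ.filter fun k : Fin n => (k : ℕ) < m) := by
    ext k
    simp only [Finset.mem_filter, Finset.mem_univ, true_and, Finset.mem_insert]
    constructor
    · intro hk
      rcases Nat.lt_succ_iff_lt_or_eq.mp hk with h' | h'
      · exact Or.inr h'
      · exact Or.inl (Fin.ext h')
    · rintro (rfl | h')
      · exact Nat.lt_succ_self m
      · omega
  have hk₀notmem : k₀ ∉ Finset.univ.filter fun k : Fin n => (k : ℕ) < m := by
    simp [hk₀]
  have hsplit : ∀ x, l * (GG n pp f (m + 1) x - c)
      - l ^ 2 / 2 * ∑ k ∈ Finset.univ.filter (fun k : Fin n => (k : ℕ) < m + 1), VV n pp f k x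
      = p x + h x := by
    intro x
    rw [hfilter, Finset.sum_insert hk₀notmem, hp, hh]
    ring
  -- patch invariance of p
  have hp_patch : ∀ x y, p (patch A' x y) = p x := by
    intro x y
    have hG : GG n pp f m (patch A' x y) = GG n pp f m x := by
      unfold GG
      congr 1
      funext y'
      rw [patch_patch (AA_mono (Nat.le_succ m)) x y y']
    have hV : ∀ k ∈ Finset.univ.filter (fun k : Fin n => (k : ℕ) < m),
        VV n pp f k (patch A' x y) = VV n pp f k x := by
      intro k hk
      simp only [Finset.mem_filter] at hk
      unfold VV
      congr 1
      funext y'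
      rw [patch_patch (AA_mono (by omega : k + 1 ≤ m + 1)) x y y']
    rw [hp]
    simp only [hG]
    congr 2
    exact Finset.sum_congr rfl hV
  -- swap invariance of p, antisymmetry of dd
  have hp_swap : ∀ z, p (z ∘ sw) = p z := by
    intro z
    have hG : GG n pp f m (z ∘ sw) = GG n pp f m z := by
      unfold GG
      congr 1
      funext y'
      rw [patch_swap_left (le_refl m) z y']
    have hV : ∀ k ∈ Finset.univ.filter (fun k : Fin n => (k : ℕ) < m),
        VV n pp f k (z ∘ sw) = VV n pp f k z := by
      intro k hk
      simp only [Finset.mem_filter] at hk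
      unfold VV
      congr 1
      funext y'
      rw [patch_swap_left (by rw [hk₀m]; omega : k + 1 ≤ (k₀ : ℕ)) z y']
    rw [hp]
    simp only [hG]
    congr 2
    exact Finset.sum_congr rfl hV
  -- the chain
  calc ∫⁻ x, ENNReal.ofReal (Real.exp (l * (GG n pp f (m + 1) x - c)
        - l ^ 2 / 2 * ∑ k ∈ Finset.univ.filter (fun k : Fin n => (k : ℕ) < m + 1),
          VV n pp f k x)) ∂pp
      = ∫⁻ x, ENNReal.ofReal (Real.exp (p x)) * ENNReal.ofReal (Real.exp (h x)) ∂pp := by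
        refine lintegral_congr fun x => ?_
        rw [hsplit x, Real.exp_add, ENNReal.ofReal_mul (Real.exp_pos _).le]
    _ ≤ ∫⁻ x, ENNReal.ofReal (Real.exp (p x))
          * ∫⁻ y, ENNReal.ofReal (Real.exp (ψ (patch A' x y))) ∂pp ∂pp := by
        refine lintegral_mono_ae (hae.mono fun x hx => ?_)
        exact mul_le_mul_right hx _
    _ = ∫⁻ x, ∫⁻ y, ENNReal.ofReal (Real.exp (p (patch A' x y)))
          * ENNReal.ofReal (Real.exp (ψ (patch A' x y))) ∂pp ∂pp := by
        refine lintegral_congr fun x => ?_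
        simp only [hp_patch]
        exact (lintegral_const_mul' _ _ ENNReal.ofReal_ne_top).symm
    _ = ∫⁻ q, ENNReal.ofReal (Real.exp (p (patch A' q.1 q.2)))
          * ENNReal.ofReal (Real.exp (ψ (patch A' q.1 q.2))) ∂(pp.prod pp) := by
        rw [lintegral_prod]
        exact ((ENNReal.measurable_ofReal.comp
            (Real.measurable_exp.comp (hp_meas.comp (measurable_patch A')))).mul
          (ENNReal.measurable_ofReal.comp
            (Real.measurable_exp.comp (hψ_meas.comp (measurable_patch A'))))).aemeasurable
    _ = ∫⁻ z, ENNReal.ofReal (Real.exp (p z)) * ENNReal.ofReal (Real.exp (ψ z)) ∂pp := by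
        exact lintegral_comp_patch μ A'
          ((ENNReal.measurable_ofReal.comp (Real.measurable_exp.comp hp_meas)).mul
            (ENNReal.measurable_ofReal.comp (Real.measurable_exp.comp hψ_meas)))
    _ ≤ ∫⁻ x, ENNReal.ofReal (Real.exp (p x)) ∂pp := by
        -- symmetrization
        set E1 : ((Fin n ⊕ Fin n) → 𝒵) → ℝ≥0∞ := fun z => ENNReal.ofReal (Real.exp (p z))
          with hE1
        set E2 : ((Fin n ⊕ Fin n) → 𝒵) → ℝ≥0∞ := fun z => ENNReal.ofReal (Real.exp (ψ z))
          with hE2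
        set E2' : ((Fin n ⊕ Fin n) → 𝒵) → ℝ≥0∞ := fun z =>
          ENNReal.ofReal (Real.exp (- (l * dd n f k₀ z) - l ^ 2 / 2 * (dd n f k₀ z) ^ 2))
          with hE2'
        have hE1m : Measurable E1 := ENNReal.measurable_ofReal.comp
          (Real.measurable_exp.comp hp_meas)
        have hE2m : Measurable E2 := ENNReal.measurable_ofReal.comp
          (Real.measurable_exp.comp hψ_meas)
        have hE2'm : Measurable E2' := ENNReal.measurable_ofReal.comp
          (Real.measurable_exp.comp ((measurable_const.mul hdd_meas).neg.sub
            (measurable_const.mul (hdd_meas.pow_const 2))))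
        have hIJ : ∫⁻ z, E1 z * E2 z ∂pp = ∫⁻ z, E1 z * E2' z ∂pp := by
          conv_lhs => rw [← lintegral_comp_equiv μ hswμ (H := fun z => E1 z * E2 z) (hE1m.mul hE2m)]
          refine lintegral_congr fun z => ?_
          have h1 : E1 (z ∘ sw) = E1 z := by rw [hE1]; simp only [hp_swap z]
          have h2 : E2 (z ∘ sw) = E2' z := by
            rw [hE2, hE2', hψ]
            simp only [show dd n f k₀ (z ∘ sw) = - dd n f k₀ z from dd_comp_swap f k₀ z]
            ring_nf
          rw [h1, h2]
        have hbound : ∀ z, E2 z + E2' z ≤ 2 := by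
          intro z
          rw [hE2, hE2', hψ]
          rw [← ENNReal.ofReal_add (Real.exp_pos _).le (Real.exp_pos _).le]
          have : Real.exp (l * dd n f k₀ z - l ^ 2 / 2 * (dd n f k₀ z) ^ 2)
              + Real.exp (- (l * dd n f k₀ z) - l ^ 2 / 2 * (dd n f k₀ z) ^ 2) ≤ 2 := by
            have e1 : Real.exp (l * dd n f k₀ z - l ^ 2 / 2 * (dd n f k₀ z) ^ 2)
                = Real.exp (l * dd n f k₀ z) * Real.exp (- (l ^ 2 / 2 * (dd n f k₀ z) ^ 2)) := by
              rw [← Real.exp_add]; ring_nf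
            have e2 : Real.exp (- (l * dd n f k₀ z) - l ^ 2 / 2 * (dd n f k₀ z) ^ 2)
                = Real.exp (- (l * dd n f k₀ z))
                  * Real.exp (- (l ^ 2 / 2 * (dd n f k₀ z) ^ 2)) := by
              rw [← Real.exp_add]; ring_nf
            rw [e1, e2, ← add_mul]
            have hcosh : Real.exp (l * dd n f k₀ z) + Real.exp (- (l * dd n f k₀ z))
                = 2 * Real.cosh (l * dd n f k₀ z) := by
              rw [Real.cosh_eq]; ring
            rw [hcosh]
            have hch : Real.cosh (l * dd n f k₀ z)
                ≤ Real.exp (l ^ 2 / 2 * (dd n f k₀ z) ^ 2) := by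
              have := Real.cosh_le_exp_half_sq (l * dd n f k₀ z)
              have heq : (l * dd n f k₀ z) ^ 2 / 2 = l ^ 2 / 2 * (dd n f k₀ z) ^ 2 := by ring
              rwa [heq] at this
            calc 2 * Real.cosh (l * dd n f k₀ z)
                  * Real.exp (- (l ^ 2 / 2 * (dd n f k₀ z) ^ 2))
                ≤ 2 * Real.exp (l ^ 2 / 2 * (dd n f k₀ z) ^ 2)
                  * Real.exp (- (l ^ 2 / 2 * (dd n f k₀ z) ^ 2)) := by
                  have hnn := (Real.exp_pos (- (l ^ 2 / 2 * (dd n f k₀ z) ^ 2))).le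
                  nlinarith [Real.exp_pos (l ^ 2 / 2 * (dd n f k₀ z) ^ 2)]
              _ = 2 := by rw [mul_assoc, ← Real.exp_add]; simp
          calc ENNReal.ofReal _ ≤ ENNReal.ofReal 2 := ENNReal.ofReal_le_ofReal this
            _ = 2 := by norm_num
        have htwo : (2 : ℝ≥0∞) * ∫⁻ z, E1 z * E2 z ∂pp ≤ 2 * ∫⁻ z, E1 z ∂pp := by
          have : (2 : ℝ≥0∞) * ∫⁻ z, E1 z * E2 z ∂pp
              = ∫⁻ z, E1 z * (E2 z + E2' z) ∂pp := by
            rw [two_mul]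
            nth_rewrite 2 [hIJ]
            rw [← lintegral_add_left (f := fun z => E1 z * E2 z) (hE1m.mul hE2m)]
            refine lintegral_congr fun z => ?_
            rw [mul_add]
          rw [this, ← lintegral_const_mul' _ _ (by norm_num : (2:ℝ≥0∞) ≠ ⊤)]
          refine lintegral_mono fun z => ?_
          rw [mul_comm (2 : ℝ≥0∞) (E1 z)]
          exact mul_le_mul_right (hbound z) _
        exact (ENNReal.mul_le_mul_iff_right (by norm_num) (by norm_num)).mp htwo

end Step
section Main
variable {𝒵 : Type*} [MeasurableSpace 𝒵] {n : ℕ} {f : (Fin n → 𝒵) → ℝ}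
variable (μ : Fin n ⊕ Fin n → Measure 𝒵) [∀ j, IsProbabilityMeasure (μ j)]

lemma GG_zero (x : Fin n ⊕ Fin n → 𝒵) :
    GG n (Measure.pi μ) f 0 x = ∫ y, FF n f y ∂(Measure.pi μ) := by
  unfold GG
  simp only [patch_zero]

lemma GG_full (x : Fin n ⊕ Fin n → 𝒵) : GG n (Measure.pi μ) f n x = FF n f x := by
  unfold GG
  simp only [FF_patch_full]
  simp [measure_univ]

lemma core_main (hμ : ∀ k : Fin n, μ (Sum.inr k) = μ (Sum.inl k)) (hf : Measurable f)
    (hF2 : MemLp (FF n f) 2 (Measure.pi μ)) (l : ℝ) :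
    ∫⁻ x, ENNReal.ofReal (Real.exp (l * (FF n f x - ∫ y, FF n f y ∂(Measure.pi μ))
      - l ^ 2 / 2 * ∑ k : Fin n, VV n (Measure.pi μ) f k x)) ∂(Measure.pi μ) ≤ 1 := by
  set c : ℝ := ∫ y, FF n f y ∂(Measure.pi μ) with hc
  have key : ∀ m, m ≤ n →
      ∫⁻ x, ENNReal.ofReal (Real.exp (l * (GG n (Measure.pi μ) f m x - c)
        - l ^ 2 / 2 * ∑ k ∈ Finset.univ.filter (fun k : Fin n => (k : ℕ) < m),
          VV n (Measure.pi μ) f k x)) ∂(Measure.pi μ) ≤ 1 := by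
    intro m
    induction m with
    | zero =>
      intro _
      have hempty : (Finset.univ.filter fun k : Fin n => (k : ℕ) < 0) = ∅ := by
        ext k; simp
      have : ∀ x : Fin n ⊕ Fin n → 𝒵, ENNReal.ofReal (Real.exp (l * (GG n (Measure.pi μ) f 0 x - c)
          - l ^ 2 / 2 * ∑ k ∈ Finset.univ.filter (fun k : Fin n => (k : ℕ) < 0),
            VV n (Measure.pi μ) f k x)) = 1 := by
        intro x
        rw [hempty, GG_zero μ x, ← hc]
        simp
      simp only [this]
      simp [lintegral_one, measure_univ]
    | succ m ih =>
      intro hm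
      exact (core_step μ hμ hf hF2 l c (by omega : m < n)).trans (ih (by omega))
  have hfin := key n (le_refl n)
  have hfull : (Finset.univ.filter fun k : Fin n => (k : ℕ) < n) = Finset.univ := by
    ext k; simp [k.isLt]
  rw [hfull] at hfin
  calc ∫⁻ x, ENNReal.ofReal (Real.exp (l * (FF n f x - c)
        - l ^ 2 / 2 * ∑ k : Fin n, VV n (Measure.pi μ) f k x)) ∂(Measure.pi μ)
      = ∫⁻ x, ENNReal.ofReal (Real.exp (l * (GG n (Measure.pi μ) f n x - c)
        - l ^ 2 / 2 * ∑ k : Fin n, VV n (Measure.pi μ) f k x)) ∂(Measure.pi μ) := by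
        refine lintegral_congr fun x => ?_
        rw [GG_full μ x]
    _ ≤ 1 := hfin

end Main
section OmegaSide
variable {Ω 𝒵 : Type*} [MeasurableSpace Ω] [MeasurableSpace 𝒵]

/-- joint sample including the primed copies. -/
def TT (n : ℕ) (Z Z' : Fin n → Ω → 𝒵) (ω : Ω) : Fin n ⊕ Fin n → 𝒵 :=
  fun j => Sum.elim Z Z' j ω

lemma measurable_TT (n : ℕ) (Z Z' : Fin n → Ω → 𝒵) (hZ : ∀ i, Measurable (Z i))
    (hZ' : ∀ i, Measurable (Z' i)) : Measurable (TT n Z Z') :=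
  measurable_pi_lambda _ fun j => by rcases j with i | i; exacts [hZ i, hZ' i]

lemma filt_eq_comap (n : ℕ) (Z Z' : Fin n → Ω → 𝒵) (m : ℕ) :
    filt n Z m = MeasurableSpace.comap
      (fun ω (j : {j : Fin n ⊕ Fin n // j ∈ AA n m}) => TT n Z Z' ω j.1)
      MeasurableSpace.pi := by
  apply le_antisymm
  · refine iSup_le fun i => iSup_le fun hi => ?_
    have : Z i = (fun x : {j : Fin n ⊕ Fin n // j ∈ AA n m} → 𝒵 =>
        x ⟨Sum.inl i, mem_AA_inl.mpr hi⟩) ∘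
        (fun ω (j : {j : Fin n ⊕ Fin n // j ∈ AA n m}) => TT n Z Z' ω j.1) := rfl
    rw [this, ← MeasurableSpace.comap_comp]
    exact MeasurableSpace.comap_mono (measurable_pi_apply _).comap_le
  · have hpi : (MeasurableSpace.pi : MeasurableSpace ({j : Fin n ⊕ Fin n // j ∈ AA n m} → 𝒵))
        = ⨆ j : {j : Fin n ⊕ Fin n // j ∈ AA n m},
          MeasurableSpace.comap (fun x => x j) inferInstance := rfl
    rw [hpi, MeasurableSpace.comap_iSup]
    refine iSup_le fun j => ?_
    rw [MeasurableSpace.comap_comp]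
    obtain ⟨j, hj⟩ := j
    rcases j with i | i
    · have hi : (i : ℕ) < m := mem_AA_inl.mp hj
      exact le_iSup_of_le i (le_iSup_of_le hi (le_of_eq rfl))
    · exact absurd hj (not_mem_AA_inr i)

lemma f_sampleRep_eq (n : ℕ) (Z Z' : Fin n → Ω → 𝒵) (f : (Fin n → 𝒵) → ℝ) (k : Fin n) (ω : Ω) :
    f (sampleRep n Z Z' k ω) = FF n f (TT n Z Z' ω ∘ Equiv.swap (Sum.inl k) (Sum.inr k)) := by
  unfold FF
  congr 1
  funext i
  by_cases h : i = k
  · subst h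
    simp [sampleRep, TT, Function.comp, Equiv.swap_apply_left]
  · have h1 : Equiv.swap (Sum.inl k) (Sum.inr k) (Sum.inl i) = Sum.inl i :=
      Equiv.swap_apply_of_ne_of_ne (by simpa using h) (by simp)
    simp [sampleRep, TT, Function.comp, h1, Function.update_of_ne h, sample]

lemma f_sample_eq (n : ℕ) (Z Z' : Fin n → Ω → 𝒵) (f : (Fin n → 𝒵) → ℝ) (ω : Ω) :
    f (sample n Z ω) = FF n f (TT n Z Z' ω) := rfl

lemma condexp_eq_VV (P : Measure Ω) [IsProbabilityMeasure P]
    (n : ℕ) (Z Z' : Fin n → Ω → 𝒵)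
    (hZ : ∀ i, Measurable (Z i)) (hZ' : ∀ i, Measurable (Z' i))
    (hindep : iIndepFun (Sum.elim Z Z') P)
    (hcopy : ∀ i, IdentDistrib (Z' i) (Z i) P P)
    (f : (Fin n → 𝒵) → ℝ) (hf : Measurable f)
    (hsq : MemLp (fun ω => f (sample n Z ω)) 2 P) (k : Fin n) :
    (fun ω => VV n (Measure.pi (fun j => P.map (Sum.elim Z Z' j))) f k (TT n Z Z' ω)) =ᵐ[P]
      P[fun ω' => (f (sample n Z ω') - f (sampleRep n Z Z' k ω')) ^ 2 | filt n Z (k + 1)] := by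
  set μj : Fin n ⊕ Fin n → Measure 𝒵 := fun j => P.map (Sum.elim Z Z' j) with hμj
  have hWm : ∀ j, Measurable (Sum.elim Z Z' j) := by
    rintro (i | i); exacts [hZ i, hZ' i]
  haveI : ∀ j, IsProbabilityMeasure (μj j) :=
    fun j => Measure.isProbabilityMeasure_map (hWm j).aemeasurable
  set pp := Measure.pi μj with hppdef
  set T := TT n Z Z' with hTdef
  have hT : Measurable T := measurable_TT n Z Z' hZ hZ'
  have hmapT : P.map T = pp := map_joint_eq_pi P (Sum.elim Z Z') hWm hindep
  have hμc : ∀ i : Fin n, μj (Sum.inr i) = μj (Sum.inl i) := fun i => (hcopy i).map_eq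
  set sw := Equiv.swap (Sum.inl k) (Sum.inr k) with hsw
  have hswμ : ∀ j, μj (sw j) = μj j := by
    intro j
    rcases eq_or_ne j (Sum.inl k) with rfl | h1
    · rw [hsw, Equiv.swap_apply_left, hμc]
    rcases eq_or_ne j (Sum.inr k) with rfl | h2
    · rw [hsw, Equiv.swap_apply_right, hμc]
    · rw [hsw, Equiv.swap_apply_of_ne_of_ne h1 h2]
  -- L² facts
  have hF2 : MemLp (FF n f) 2 pp := by
    rw [← hmapT]
    refine (memLp_map_measure_iff (measurable_FF hf).aestronglyMeasurable
      hT.aemeasurable).mpr ?_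
    exact hsq
  have hdd_meas : Measurable (dd n f k) := measurable_dd hf k
  have hdd2 : MemLp (dd n f k) 2 pp :=
    hF2.sub (memLp_comp_equiv μj hswμ (measurable_FF hf) hF2)
  have hddT2 : MemLp (fun ω => dd n f k (T ω)) 2 P := by
    refine (memLp_map_measure_iff hdd_meas.aestronglyMeasurable hT.aemeasurable).mp ?_
    rw [hmapT]; exact hdd2
  have hgint : Integrable (fun ω => (dd n f k (T ω)) ^ 2) P := hddT2.integrable_sq
  -- pointwise rewriting of the conditioned function
  have hfun : (fun ω' => (f (sample n Z ω') - f (sampleRep n Z Z' k ω')) ^ 2)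
      = fun ω' => (dd n f k (T ω')) ^ 2 := by
    funext ω'
    rw [f_sampleRep_eq n Z Z' f k ω', f_sample_eq n Z Z' f ω']
    rfl
  rw [hfun]
  -- candidate
  set G : ((Fin n ⊕ Fin n) → 𝒵) → ℝ := VV n pp f k with hG
  have hGmeas : Measurable G := measurable_VV μj hf k
  have hDjoint : Integrable
      (fun q : ((Fin n ⊕ Fin n) → 𝒵) × ((Fin n ⊕ Fin n) → 𝒵) =>
        (dd n f k (patch (AA n (k + 1)) q.1 q.2)) ^ 2) (pp.prod pp) :=
    (memLp_comp_patch μj _ hdd_meas hdd2).integrable_sq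
  have hGint : Integrable G pp := hDjoint.integral_prod_left
  have hGTint : Integrable (fun ω => G (T ω)) P := by
    refine (integrable_map_measure hGmeas.aestronglyMeasurable hT.aemeasurable).mp ?_
    rw [hmapT]; exact hGint
  -- σ-algebra
  have hm_le : filt n Z (k + 1) ≤ ‹MeasurableSpace Ω› := by
    rw [filt_eq_comap n Z Z' (k + 1)]
    exact (measurable_pi_lambda _
      (fun j : {j : Fin n ⊕ Fin n // j ∈ AA n (k + 1)} => hWm j.1)).comap_le
  haveI : SigmaFinite (P.trim hm_le) := inferInstance
  refine ae_eq_condExp_of_forall_setIntegral_eq hm_le hgint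
    (fun s _ _ => hGTint.integrableOn) (fun s hs _ => ?_) ?_
  · -- set integral equality
    rw [filt_eq_comap n Z Z' (k + 1)] at hs
    obtain ⟨C, hC, rfl⟩ := hs
    set rE : ((Fin n ⊕ Fin n) → 𝒵) → ({j : Fin n ⊕ Fin n // j ∈ AA n (k + 1)} → 𝒵) :=
      fun x j => x j.1 with hrE
    have hrEm : Measurable rE := measurable_pi_lambda _ fun j => measurable_pi_apply j.1
    set B : Set ((Fin n ⊕ Fin n) → 𝒵) := rE ⁻¹' C with hB
    have hBmeas : MeasurableSet B := hrEm hC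
    have hpre : (fun ω (j : {j : Fin n ⊕ Fin n // j ∈ AA n (k + 1)}) => TT n Z Z' ω j.1) ⁻¹' C
        = T ⁻¹' B := rfl
    rw [hpre]
    have hΦB : (fun q : ((Fin n ⊕ Fin n) → 𝒵) × ((Fin n ⊕ Fin n) → 𝒵) =>
        patch (AA n (k + 1)) q.1 q.2) ⁻¹' B = B ×ˢ Set.univ := by
      ext ⟨x, y⟩
      simp only [Set.mem_preimage, Set.mem_prod, Set.mem_univ, and_true, hB]
      have : rE (patch (AA n (k + 1)) x y) = rE x := by
        funext j
        simp [hrE, patch, j.2]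
      rw [this]
    have hTB : ∫ ω in T ⁻¹' B, G (T ω) ∂P = ∫ x in B, G x ∂pp := by
      rw [← hmapT]
      exact (setIntegral_map hBmeas hGmeas.aestronglyMeasurable hT.aemeasurable).symm
    have hTB2 : ∫ ω in T ⁻¹' B, (dd n f k (T ω)) ^ 2 ∂P
        = ∫ x in B, (dd n f k x) ^ 2 ∂pp := by
      rw [← hmapT]
      exact (setIntegral_map hBmeas (hdd_meas.pow_const 2).aestronglyMeasurable
        hT.aemeasurable).symm
    rw [hTB, hTB2]
    -- the product-space computation
    have hrestr : Integrable
        (fun q : ((Fin n ⊕ Fin n) → 𝒵) × ((Fin n ⊕ Fin n) → 𝒵) =>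
          (dd n f k (patch (AA n (k + 1)) q.1 q.2)) ^ 2) ((pp.restrict B).prod pp) := by
      rw [Measure.restrict_prod_eq_prod_univ]
      exact hDjoint.restrict
    calc ∫ x in B, G x ∂pp
        = ∫ x, (∫ y, (dd n f k (patch (AA n (k + 1)) x y)) ^ 2 ∂pp) ∂(pp.restrict B) := rfl
      _ = ∫ q, (dd n f k (patch (AA n (k + 1)) q.1 q.2)) ^ 2 ∂((pp.restrict B).prod pp) :=
          (integral_prod _ hrestr).symm
      _ = ∫ q in B ×ˢ Set.univ, (dd n f k (patch (AA n (k + 1)) q.1 q.2)) ^ 2 ∂(pp.prod pp) := by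
          rw [Measure.restrict_prod_eq_prod_univ]
      _ = ∫ q in (fun q : ((Fin n ⊕ Fin n) → 𝒵) × ((Fin n ⊕ Fin n) → 𝒵) =>
            patch (AA n (k + 1)) q.1 q.2) ⁻¹' B,
            (dd n f k (patch (AA n (k + 1)) q.1 q.2)) ^ 2 ∂(pp.prod pp) := by rw [hΦB]
      _ = ∫ x in B, (dd n f k x) ^ 2 ∂((pp.prod pp).map
            (fun q : ((Fin n ⊕ Fin n) → 𝒵) × ((Fin n ⊕ Fin n) → 𝒵) =>
              patch (AA n (k + 1)) q.1 q.2)) :=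
          (setIntegral_map hBmeas (hdd_meas.pow_const 2).aestronglyMeasurable
            (measurable_patch _).aemeasurable).symm
      _ = ∫ x in B, (dd n f k x) ^ 2 ∂pp := by rw [map_patch]
  · -- strong measurability w.r.t. the filtration
    set HH : ({j : Fin n ⊕ Fin n // j ∈ AA n (k + 1)} → 𝒵) → ℝ := fun cx =>
      ∫ y, (dd n f k (patchD (AA n (k + 1)) cx y)) ^ 2 ∂pp with hHH
    have hHHm : Measurable HH := by
      have hjoint : Measurable (fun q : ({j : Fin n ⊕ Fin n // j ∈ AA n (k + 1)} → 𝒵) ×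
          ((Fin n ⊕ Fin n) → 𝒵) => (dd n f k (patchD (AA n (k + 1)) q.1 q.2)) ^ 2) :=
        (hdd_meas.comp (measurable_patchD _)).pow_const 2
      exact hjoint.stronglyMeasurable.integral_prod_right'.measurable
    have hGH : ∀ x, G x = HH (fun j => x j.1) := by
      intro x
      simp only [hG, hHH]
      unfold VV
      simp only [patchD_restrict]
    refine StronglyMeasurable.aestronglyMeasurable ?_
    have : (fun ω => G (T ω))
        = HH ∘ (fun ω (j : {j : Fin n ⊕ Fin n // j ∈ AA n (k + 1)}) => TT n Z Z' ω j.1) := by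
      funext ω
      exact hGH (T ω)
    rw [this, filt_eq_comap n Z Z' (k + 1)]
    have hRcomap : @Measurable Ω _ (MeasurableSpace.comap
        (fun ω (j : {j : Fin n ⊕ Fin n // j ∈ AA n (k + 1)}) => TT n Z Z' ω j.1)
        MeasurableSpace.pi) _
        (fun ω (j : {j : Fin n ⊕ Fin n // j ∈ AA n (k + 1)}) => TT n Z Z' ω j.1) :=
      fun s hs => ⟨s, hs, rfl⟩
    exact (hHHm.comp hRcomap).stronglyMeasurable

end OmegaSide

/-- `(Δ, √V)` is a canonical pair:
for every `λ ∈ ℝ`, `E[exp(λ·Δ − (λ²/2)·V)] ≤ 1`. -/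
theorem gap_varEst_canonical_pair
    (P : Measure Ω) [IsProbabilityMeasure P]
    (n : ℕ) (Z Z' : Fin n → Ω → 𝒵)
    (hZ : ∀ i, Measurable (Z i)) (hZ' : ∀ i, Measurable (Z' i))
    (hindep : iIndepFun (Sum.elim Z Z') P)
    (hcopy : ∀ i, IdentDistrib (Z' i) (Z i) P P)
    (f : (Fin n → 𝒵) → ℝ) (hf : Measurable f)
    (hsq : MemLp (fun ω => f (sample n Z ω)) 2 P)
    (l : ℝ) :
    ∫⁻ ω, ENNReal.ofReal
        (Real.exp (l * gap P n Z f ω - l ^ 2 / 2 * varEst P n Z Z' f ω)) ∂P ≤ 1 := by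
  set μj : Fin n ⊕ Fin n → Measure 𝒵 := fun j => P.map (Sum.elim Z Z' j) with hμj
  have hWm : ∀ j, Measurable (Sum.elim Z Z' j) := by
    rintro (i | i); exacts [hZ i, hZ' i]
  haveI : ∀ j, IsProbabilityMeasure (μj j) :=
    fun j => Measure.isProbabilityMeasure_map (hWm j).aemeasurable
  set pp := Measure.pi μj with hpp
  set T := TT n Z Z' with hT'
  have hT : Measurable T := measurable_TT n Z Z' hZ hZ'
  have hmapT : P.map T = pp := map_joint_eq_pi P _ hWm hindep
  have hμc : ∀ i : Fin n, μj (Sum.inr i) = μj (Sum.inl i) := fun i => (hcopy i).map_eq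
  have hF2 : MemLp (FF n f) 2 pp := by
    rw [← hmapT]
    exact (memLp_map_measure_iff (measurable_FF hf).aestronglyMeasurable
      hT.aemeasurable).mpr hsq
  have hgap : ∀ ω, gap P n Z f ω = FF n f (T ω) - ∫ y, FF n f y ∂pp := by
    intro ω
    have h1 : ∫ ω', f (sample n Z ω') ∂P = ∫ y, FF n f y ∂pp := by
      rw [← hmapT, integral_map hT.aemeasurable (measurable_FF hf).aestronglyMeasurable]
      rfl
    unfold gap
    rw [h1]
    rfl
  have hvar : ∀ᵐ ω ∂P, varEst P n Z Z' f ω = ∑ k : Fin n, VV n pp f k (T ω) := by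
    have hall : ∀ᵐ ω ∂P, ∀ k : Fin n,
        (P[fun ω' => (f (sample n Z ω') - f (sampleRep n Z Z' k ω')) ^ 2 |
          filt n Z (k + 1)]) ω = VV n pp f k (T ω) :=
      ae_all_iff.mpr fun k =>
        (condexp_eq_VV P n Z Z' hZ hZ' hindep hcopy f hf hsq k).symm.mono fun ω h => h
    filter_upwards [hall] with ω hω
    unfold varEst
    exact Finset.sum_congr rfl fun k _ => hω k
  have hmeasle : Measurable fun x : (Fin n ⊕ Fin n) → 𝒵 => ENNReal.ofReal
      (Real.exp (l * (FF n f x - ∫ y, FF n f y ∂pp)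
        - l ^ 2 / 2 * ∑ k : Fin n, VV n pp f k x)) := by
    refine ENNReal.measurable_ofReal.comp (Real.measurable_exp.comp ?_)
    exact ((measurable_const.mul ((measurable_FF hf).sub measurable_const)).sub
      (measurable_const.mul (Finset.measurable_sum _ fun k _ => measurable_VV μj hf k)))
  calc ∫⁻ ω, ENNReal.ofReal
        (Real.exp (l * gap P n Z f ω - l ^ 2 / 2 * varEst P n Z Z' f ω)) ∂P
      = ∫⁻ ω, ENNReal.ofReal (Real.exp (l * (FF n f (T ω) - ∫ y, FF n f y ∂pp)
          - l ^ 2 / 2 * ∑ k : Fin n, VV n pp f k (T ω))) ∂P := by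
        refine lintegral_congr_ae ?_
        filter_upwards [hvar] with ω hω
        rw [hgap ω, hω]
    _ = ∫⁻ x, ENNReal.ofReal (Real.exp (l * (FF n f x - ∫ y, FF n f y ∂pp)
          - l ^ 2 / 2 * ∑ k : Fin n, VV n pp f k x)) ∂(P.map T) :=
        (lintegral_map hmeasle hT).symm
    _ = ∫⁻ x, ENNReal.ofReal (Real.exp (l * (FF n f x - ∫ y, FF n f y ∂pp)
          - l ^ 2 / 2 * ∑ k : Fin n, VV n pp f k x)) ∂pp := by
        rw [hmapT]
    _ ≤ 1 := core_main μj hμc hf hF2 l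
end

section
/- If X is a real random variable such that X and −X have the same distribution, then for every λ ∈ ℝ one has E[exp(λ·X − (λ²/2)·X²)] ≤ 1. -/
open MeasureTheory ProbabilityTheory Real

/-- If a real random variable `X` has the same distribution as `-X`,
then for every `λ ∈ ℝ`, `E[exp(λ·X − (λ²/2)·X²)] ≤ 1`. -/
theorem symmetric_rv_canonical
    {Ω : Type*} [MeasurableSpace Ω] (P : Measure Ω) [IsProbabilityMeasure P]
    (X : Ω → ℝ) (hX : Measurable X)
    (hsymm : IdentDistrib X (fun ω => -X ω) P P) (l : ℝ) :
    ∫ ω, Real.exp (l * X ω - l ^ 2 / 2 * (X ω) ^ 2) ∂P ≤ 1 := by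
  set f : ℝ → ℝ := fun x => Real.exp (l * x - l ^ 2 / 2 * x ^ 2) with hf
  have hfm : Measurable f := by
    apply Real.measurable_exp.comp
    fun_prop
  -- pointwise bound f x ≤ exp (1/2)
  have hb : ∀ x : ℝ, f x ≤ Real.exp (1/2) := by
    intro x
    apply Real.exp_le_exp.mpr
    nlinarith [sq_nonneg (l * x - 1)]
  have hint : ∀ (Y : Ω → ℝ), Measurable Y → Integrable (fun ω => f (Y ω)) P := by
    intro Y hY
    refine Integrable.mono' (integrable_const (Real.exp (1/2))) ((hfm.comp hY).aestronglyMeasurable) ?_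
    filter_upwards with ω
    rw [Real.norm_eq_abs, abs_of_pos (Real.exp_pos _)]
    exact hb _
  have hint1 : Integrable (fun ω => f (X ω)) P := hint X hX
  have hint2 : Integrable (fun ω => f (-X ω)) P := hint _ hX.neg
  have heq : ∫ ω, f (X ω) ∂P = ∫ ω, f (-X ω) ∂P :=
    (hsymm.comp hfm).integral_eq
  -- pointwise: f x + f (-x) ≤ 2
  have hkey : ∀ x : ℝ, f x + f (-x) ≤ 2 := by
    intro x
    have h1 : f x + f (-x) = 2 * Real.cosh (l * x) * Real.exp (-(l ^ 2 / 2 * x ^ 2)) := by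
      simp only [hf, Real.cosh_eq]
      rw [show l * x - l ^ 2 / 2 * x ^ 2 = l * x + -(l ^ 2 / 2 * x ^ 2) by ring,
          show l * -x - l ^ 2 / 2 * (-x) ^ 2 = -(l * x) + -(l ^ 2 / 2 * x ^ 2) by ring,
          Real.exp_add, Real.exp_add]
      ring
    have h2 : Real.cosh (l * x) ≤ Real.exp ((l * x) ^ 2 / 2) := Real.cosh_le_exp_half_sq _
    have h3 : (2 : ℝ) * Real.cosh (l * x) * Real.exp (-(l ^ 2 / 2 * x ^ 2))
        ≤ 2 * Real.exp ((l * x) ^ 2 / 2) * Real.exp (-(l ^ 2 / 2 * x ^ 2)) := by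
      have := Real.exp_pos (-(l ^ 2 / 2 * x ^ 2))
      nlinarith
    have h4 : (2 : ℝ) * Real.exp ((l * x) ^ 2 / 2) * Real.exp (-(l ^ 2 / 2 * x ^ 2)) = 2 := by
      rw [mul_assoc, ← Real.exp_add]
      have : (l * x) ^ 2 / 2 + -(l ^ 2 / 2 * x ^ 2) = 0 := by ring
      rw [this, Real.exp_zero, mul_one]
    linarith
  have hsum : ∫ ω, (f (X ω) + f (-X ω)) ∂P ≤ 2 := by
    calc ∫ ω, (f (X ω) + f (-X ω)) ∂P ≤ ∫ _ω, (2 : ℝ) ∂P := by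
          apply integral_mono (hint1.add hint2) (integrable_const 2)
          intro ω; exact hkey (X ω)
      _ = 2 := by simp
  rw [integral_add hint1 hint2, ← heq] at hsum
  linarith [hsum]
end

section
/- In the heterogeneous setting where Z_1,…,Z_n are independent random variables taking values in possibly different measurable spaces 𝒵_1,…,𝒵_n and f : 𝒵_1 × ⋯ × 𝒵_n → ℝ is measurable with f(S) square-integrable, the pair (Δ, √V) is a canonical pair; that is, for every λ ∈ ℝ one has E[exp(λ·Δ − (λ²/2)·V)] ≤ 1. -/
set_option linter.unusedSectionVars false
set_option linter.unusedVariables false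
set_option maxHeartbeats 1000000

open MeasureTheory ProbabilityTheory Real ENNReal Finset

section CondexpIndep
variable {Ω : Type*} [MeasurableSpace Ω] {α β : Type*} [MeasurableSpace α] [MeasurableSpace β]
  {μ : Measure Ω} [IsProbabilityMeasure μ]

variable {Ω : Type*} [MeasurableSpace Ω] {α β : Type*} [MeasurableSpace α] [MeasurableSpace β]
  {μ : Measure Ω} [IsProbabilityMeasure μ]

/-- Conditional expectation of `φ (X, Y)` given `σ(X)` when `X ⟂ Y`. -/
theorem condexp_indepFun_integral {X : Ω → α} {Y : Ω → β}
    (hX : Measurable X) (hY : Measurable Y) (hind : IndepFun X Y μ)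
    {φ : α × β → ℝ} (hφ : Measurable φ)
    (hint : Integrable (fun ω => φ (X ω, Y ω)) μ) :
    μ[fun ω => φ (X ω, Y ω) | MeasurableSpace.comap X inferInstance]
      =ᵐ[μ] fun ω => ∫ y, φ (X ω, y) ∂(μ.map Y) := by
  have hmap : μ.map (fun ω => (X ω, Y ω)) = (μ.map X).prod (μ.map Y) :=
    (indepFun_iff_map_prod_eq_prod_map_map hX.aemeasurable hY.aemeasurable).mp hind
  have hφint : Integrable φ ((μ.map X).prod (μ.map Y)) := by
    rw [← hmap]
    rwa [integrable_map_measure hφ.aestronglyMeasurable (hX.prodMk hY).aemeasurable]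
  have hGmeas : StronglyMeasurable fun x => ∫ y, φ (x, y) ∂(μ.map Y) :=
    StronglyMeasurable.integral_prod_right' hφ.stronglyMeasurable
  have hGint : Integrable (fun x => ∫ y, φ (x, y) ∂(μ.map Y)) (μ.map X) :=
    hφint.integral_prod_left
  refine (ae_eq_condExp_of_forall_setIntegral_eq hX.comap_le hint ?_ ?_ ?_).symm
  · intro s _ _
    refine Integrable.integrableOn ?_
    have := (integrable_map_measure hGmeas.aestronglyMeasurable hX.aemeasurable).mp hGint
    exact this
  · rintro s ⟨t, ht, rfl⟩ _
    have h1 : ∫ ω in X ⁻¹' t, (fun x => ∫ y, φ (x, y) ∂(μ.map Y)) (X ω) ∂μ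
        = ∫ x in t, (fun x => ∫ y, φ (x, y) ∂(μ.map Y)) x ∂(μ.map X) :=
      (setIntegral_map ht hGmeas.aestronglyMeasurable hX.aemeasurable).symm
    have h2 : ∫ ω in X ⁻¹' t, φ (X ω, Y ω) ∂μ
        = ∫ p in t ×ˢ (Set.univ : Set β), φ p ∂((μ.map X).prod (μ.map Y)) := by
      rw [← hmap, setIntegral_map (ht.prod MeasurableSet.univ) hφ.aestronglyMeasurable
        (hX.prodMk hY).aemeasurable]
      have : (fun ω => (X ω, Y ω)) ⁻¹' (t ×ˢ (Set.univ : Set β)) = X ⁻¹' t := by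
        ext ω; simp
      rw [this]
    have hres : ((μ.map X).restrict t).prod (μ.map Y)
        = ((μ.map X).prod (μ.map Y)).restrict (t ×ˢ (Set.univ : Set β)) := by
      rw [← Measure.prod_restrict, Measure.restrict_univ]
    rw [h1, h2, ← hres, integral_prod]
    rw [hres]
    exact hφint.restrict
  · refine StronglyMeasurable.aestronglyMeasurable ?_
    exact hGmeas.comp_measurable (measurable_iff_comap_le.mpr le_rfl)
end CondexpIndep

variable {Ω : Type*} [MeasurableSpace Ω] {n : ℕ} {𝒵 : Fin n → Type*}
  [∀ i, MeasurableSpace (𝒵 i)]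

/-- The sample `S = (Z_1, …, Z_n)` in the heterogeneous setting. -/
def sampleDep (Z : ∀ i : Fin n, Ω → 𝒵 i) (ω : Ω) : ∀ i, 𝒵 i := fun i => Z i ω

/-- `S^{(k)}`: the sample with its `k`-th coordinate replaced by `Z'_k`. -/
def sampleRepDep (Z Z' : ∀ i : Fin n, Ω → 𝒵 i) (k : Fin n) (ω : Ω) : ∀ i, 𝒵 i :=
  Function.update (sampleDep Z ω) k (Z' k ω)

/-- The σ-algebra generated by `Z_1, …, Z_m`. -/
def filtDep (Z : ∀ i : Fin n, Ω → 𝒵 i) (m : ℕ) : MeasurableSpace Ω :=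
  ⨆ i : Fin n, ⨆ _ : (i : ℕ) < m, MeasurableSpace.comap (Z i) inferInstance

/-- The gap `Δ = f(S) − E[f(S)]`. -/
noncomputable def gapDep (P : Measure Ω) (Z : ∀ i : Fin n, Ω → 𝒵 i)
    (f : (∀ i, 𝒵 i) → ℝ) (ω : Ω) : ℝ :=
  f (sampleDep Z ω) - ∫ ω', f (sampleDep Z ω') ∂P

/-- The semi-empirical variance estimator
`V = Σ_{k=1}^n E[(f(S) − f(S^{(k)}))² | Z_1, …, Z_k]`. -/
noncomputable def varEstDep (P : Measure Ω) (Z Z' : ∀ i : Fin n, Ω → 𝒵 i)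
    (f : (∀ i, 𝒵 i) → ℝ) (ω : Ω) : ℝ :=
  ∑ k : Fin n,
    (P[fun ω' => (f (sampleDep Z ω') - f (sampleRepDep Z Z' k ω')) ^ 2 |
      filtDep Z (k + 1)]) ω


/-! ### Auxiliary infrastructure -/


def auxGlue (m : ℕ) (x : ∀ i : {i : Fin n // (i : ℕ) < m}, 𝒵 i)
    (w : ∀ i : {i : Fin n // ¬(i : ℕ) < m}, 𝒵 i) : ∀ i, 𝒵 i :=
  fun i => if h : (i : ℕ) < m then x ⟨i, h⟩ else w ⟨i, h⟩

def auxXlow (Z : ∀ i : Fin n, Ω → 𝒵 i) (m : ℕ) :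
    Ω → ∀ i : {i : Fin n // (i : ℕ) < m}, 𝒵 i := fun ω i => Z i ω

def auxWhigh (Z : ∀ i : Fin n, Ω → 𝒵 i) (m : ℕ) :
    Ω → ∀ i : {i : Fin n // ¬(i : ℕ) < m}, 𝒵 i := fun ω i => Z i ω

def auxExt (k : Fin n) (a : 𝒵 k) (v : ∀ i : {i : Fin n // ¬(i : ℕ) < (k : ℕ) + 1}, 𝒵 i) :
    ∀ i : {i : Fin n // ¬(i : ℕ) < (k : ℕ)}, 𝒵 i :=
  fun i =>
    if h : i.1 = k then cast (congrArg 𝒵 h).symm a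
    else v ⟨i.1, by
      have h2 := i.2
      have h3 : (i.1 : ℕ) ≠ (k : ℕ) := fun hh => h (Fin.ext hh)
      omega⟩

def auxRestr (k : Fin n) (x : ∀ i : {i : Fin n // (i : ℕ) < (k : ℕ) + 1}, 𝒵 i) :
    ∀ i : {i : Fin n // (i : ℕ) < (k : ℕ)}, 𝒵 i :=
  fun i => x ⟨i.1, Nat.lt_succ_of_lt i.2⟩

def auxTheta (k : Fin n) (a : 𝒵 k) (v : ∀ i : {i : Fin n // i ≠ k}, 𝒵 i) : ∀ i, 𝒵 i :=
  fun i => if h : i = k then cast (congrArg 𝒵 h).symm a else v ⟨i, h⟩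

def auxXrest (Z : ∀ i : Fin n, Ω → 𝒵 i) (k : Fin n) :
    Ω → ∀ i : {i : Fin n // i ≠ k}, 𝒵 i := fun ω i => Z i ω

/-! Equation lemmas -/

lemma auxGlue_eq_sample (Z : ∀ i : Fin n, Ω → 𝒵 i) (m : ℕ) (ω : Ω) :
    auxGlue m (auxXlow Z m ω) (auxWhigh Z m ω) = sampleDep Z ω := by
  funext i
  simp only [auxGlue, auxXlow, auxWhigh, sampleDep]
  split <;> rfl

lemma auxWhigh_eq_ext (Z : ∀ i : Fin n, Ω → 𝒵 i) (k : Fin n) (ω : Ω) :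
    auxWhigh Z (k : ℕ) ω = auxExt k (Z k ω) (auxWhigh Z ((k : ℕ) + 1) ω) := by
  funext i
  obtain ⟨i, hi⟩ := i
  simp only [auxWhigh, auxExt]
  by_cases h : i = k
  · subst h
    simp
  · simp [h, auxWhigh]

lemma auxExt_update (k : Fin n) (a b : 𝒵 k)
    (v : ∀ i : {i : Fin n // ¬(i : ℕ) < (k : ℕ) + 1}, 𝒵 i)
    (x : ∀ i : {i : Fin n // (i : ℕ) < (k : ℕ)}, 𝒵 i) :
    Function.update (auxGlue (k : ℕ) x (auxExt k a v)) k b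
      = auxGlue (k : ℕ) x (auxExt k b v) := by
  funext i
  by_cases h : i = k
  · subst h
    simp [auxGlue, auxExt]
  · rw [Function.update_of_ne h]
    simp only [auxGlue]
    split
    · rfl
    · simp [auxExt, h]

lemma auxUpdate_glue (k : Fin n) (b : 𝒵 k)
    (x : ∀ i : {i : Fin n // (i : ℕ) < (k : ℕ) + 1}, 𝒵 i)
    (w : ∀ i : {i : Fin n // ¬(i : ℕ) < (k : ℕ) + 1}, 𝒵 i) :
    Function.update (auxGlue ((k : ℕ) + 1) x w) k b
      = auxGlue (k : ℕ) (auxRestr k x) (auxExt k b w) := by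
  funext i
  by_cases h : i = k
  · subst h
    simp [auxGlue, auxExt, Nat.lt_irrefl]
  · rw [Function.update_of_ne h]
    have h3 : (i : ℕ) ≠ (k : ℕ) := fun hh => h (Fin.ext hh)
    simp only [auxGlue, auxRestr, auxExt]
    by_cases h2 : (i : ℕ) < (k : ℕ)
    · rw [dif_pos (by omega), dif_pos h2]
    · rw [dif_neg (by omega), dif_neg h2]
      simp [h]

lemma auxTheta_sample (Z Z' : ∀ i : Fin n, Ω → 𝒵 i) (k : Fin n) (ω : Ω) :
    sampleDep Z ω = auxTheta k (Z k ω) (auxXrest Z k ω) := by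
  funext i
  simp only [sampleDep, auxTheta, auxXrest]
  by_cases h : i = k
  · subst h; simp
  · simp [h]

lemma auxTheta_sampleRep (Z Z' : ∀ i : Fin n, Ω → 𝒵 i) (k : Fin n) (ω : Ω) :
    sampleRepDep Z Z' k ω = auxTheta k (Z' k ω) (auxXrest Z k ω) := by
  funext i
  simp only [sampleRepDep, auxTheta, auxXrest]
  by_cases h : i = k
  · subst h; simp
  · rw [Function.update_of_ne h]
    simp [h, sampleDep]

/-! Measurability -/

lemma measurable_auxXlow (Z : ∀ i : Fin n, Ω → 𝒵 i) (hZ : ∀ i, Measurable (Z i)) (m : ℕ) :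
    Measurable (auxXlow Z m) :=
  measurable_pi_lambda _ fun i => hZ i

lemma measurable_auxWhigh (Z : ∀ i : Fin n, Ω → 𝒵 i) (hZ : ∀ i, Measurable (Z i)) (m : ℕ) :
    Measurable (auxWhigh Z m) :=
  measurable_pi_lambda _ fun i => hZ i

lemma measurable_auxXrest (Z : ∀ i : Fin n, Ω → 𝒵 i) (hZ : ∀ i, Measurable (Z i)) (k : Fin n) :
    Measurable (auxXrest Z k) :=
  measurable_pi_lambda _ fun i => hZ i

lemma measurable_sampleDep (Z : ∀ i : Fin n, Ω → 𝒵 i) (hZ : ∀ i, Measurable (Z i)) :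
    Measurable (sampleDep Z) :=
  measurable_pi_lambda _ fun i => hZ i

lemma measurable_auxGlue (m : ℕ) :
    Measurable (fun p : (∀ i : {i : Fin n // (i : ℕ) < m}, 𝒵 i) ×
      (∀ i : {i : Fin n // ¬(i : ℕ) < m}, 𝒵 i) => auxGlue m p.1 p.2) := by
  apply measurable_pi_lambda
  intro i
  simp only [auxGlue]
  by_cases h : (i : ℕ) < m
  · simp only [dif_pos h]
    exact (measurable_pi_apply _).comp measurable_fst
  · simp only [dif_neg h]
    exact (measurable_pi_apply _).comp measurable_snd

lemma measurable_auxExt (k : Fin n) :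
    Measurable (fun p : 𝒵 k × (∀ i : {i : Fin n // ¬(i : ℕ) < (k : ℕ) + 1}, 𝒵 i) =>
      auxExt k p.1 p.2) := by
  apply measurable_pi_lambda
  intro i
  obtain ⟨i, hi⟩ := i
  simp only [auxExt]
  by_cases h : i = k
  · subst h
    simp only [dif_pos rfl]
    exact measurable_fst
  · simp only [dif_neg h]
    exact (measurable_pi_apply _).comp measurable_snd

lemma measurable_auxTheta (k : Fin n) :
    Measurable (fun p : 𝒵 k × (∀ i : {i : Fin n // i ≠ k}, 𝒵 i) => auxTheta k p.1 p.2) := by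
  apply measurable_pi_lambda
  intro i
  simp only [auxTheta]
  by_cases h : i = k
  · subst h
    simp only [dif_pos rfl]
    exact measurable_fst
  · simp only [dif_neg h]
    exact (measurable_pi_apply _).comp measurable_snd

/-! Filtration facts -/

lemma comap_auxXlow (Z : ∀ i : Fin n, Ω → 𝒵 i) (m : ℕ) :
    MeasurableSpace.comap (auxXlow Z m) inferInstance = filtDep Z m := by
  show MeasurableSpace.comap (auxXlow Z m) MeasurableSpace.pi = _
  rw [MeasurableSpace.pi, MeasurableSpace.comap_iSup]
  simp only [MeasurableSpace.comap_comp]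
  rw [filtDep, iSup_subtype']
  rfl

lemma filtDep_le (Z : ∀ i : Fin n, Ω → 𝒵 i) (hZ : ∀ i, Measurable (Z i)) (m : ℕ) :
    filtDep Z m ≤ ‹MeasurableSpace Ω› := by
  refine iSup_le fun i => iSup_le fun _ => ?_
  exact (hZ i).comap_le

lemma filtDep_mono (Z : ∀ i : Fin n, Ω → 𝒵 i) {m m' : ℕ} (h : m ≤ m') :
    filtDep Z m ≤ filtDep Z m' := by
  refine iSup_le fun i => iSup_le fun hi => ?_
  exact le_iSup_of_le i (le_iSup_of_le (lt_of_lt_of_le hi h) le_rfl)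

lemma filtDep_zero (Z : ∀ i : Fin n, Ω → 𝒵 i) : filtDep Z 0 = ⊥ := by
  simp [filtDep]

instance auxElimMS : ∀ x : Fin n ⊕ Fin n, MeasurableSpace (Sum.elim 𝒵 𝒵 x) :=
  fun x => Sum.rec (motive := fun x => MeasurableSpace (Sum.elim 𝒵 𝒵 x))
    (fun i => (inferInstance : MeasurableSpace (𝒵 i)))
    (fun i => (inferInstance : MeasurableSpace (𝒵 i))) x

section Indep

variable {P : Measure Ω} [IsProbabilityMeasure P] {Z Z' : ∀ i : Fin n, Ω → 𝒵 i}


variable (hindep : iIndepFun (β := Sum.elim 𝒵 𝒵)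
      (m := fun x => Sum.rec (motive := fun x => MeasurableSpace (Sum.elim 𝒵 𝒵 x))
        (fun i => (inferInstance : MeasurableSpace (𝒵 i)))
        (fun i => (inferInstance : MeasurableSpace (𝒵 i))) x)
      (fun x => Sum.rec (motive := fun x => Ω → Sum.elim 𝒵 𝒵 x) Z Z' x) P)
  (hZ : ∀ i, Measurable (Z i)) (hZ' : ∀ i, Measurable (Z' i))

include hindep hZ hZ'

omit hindep hZ hZ' in
private lemma aux_measurable_U' (hZ : ∀ i, Measurable (Z i)) (hZ' : ∀ i, Measurable (Z' i)) :
    ∀ x : Fin n ⊕ Fin n,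
      Measurable (fun ω => Sum.rec (motive := fun x => Ω → Sum.elim 𝒵 𝒵 x) Z Z' x ω) :=
  fun x => by cases x with
  | inl i => exact hZ i
  | inr i => exact hZ' i

/-- `(Z_i)_{i<m}` is independent of `(（Z_i)_{i≥m}, Z'_k)`. -/
lemma aux_indep_low_highZ' (m : ℕ) (k : Fin n) :
    IndepFun (auxXlow Z m) (fun ω => (auxWhigh Z m ω, Z' k ω)) P := by
  classical
  have h := hindep.indepFun_finset
    ((univ.filter fun i : Fin n => (i : ℕ) < m).image Sum.inl)
    (((univ.filter fun i : Fin n => ¬(i : ℕ) < m).image Sum.inl) ∪ {Sum.inr k})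
    (by
      simp only [Finset.disjoint_left, Finset.mem_image, Finset.mem_union, Finset.mem_filter,
        Finset.mem_univ, true_and, Finset.mem_singleton]
      rintro x ⟨i, hi, rfl⟩
      rintro (⟨j, hj, hji⟩ | h)
      · cases Sum.inl_injective hji; exact hj hi
      · cases h)
    (fun x => aux_measurable_U' hZ hZ' x)
  have h2 := h.comp (φ := fun v => (fun i : {i : Fin n // (i : ℕ) < m} =>
      v ⟨Sum.inl i.1, Finset.mem_image_of_mem _ (by simpa using i.2)⟩))
    (ψ := fun v => ((fun i : {i : Fin n // ¬(i : ℕ) < m} =>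
      v ⟨Sum.inl i.1, Finset.mem_union_left _ (Finset.mem_image_of_mem _ (Finset.mem_filter.mpr ⟨Finset.mem_univ _, i.2⟩))⟩),
      v ⟨Sum.inr k, Finset.mem_union_right _ (Finset.mem_singleton_self _)⟩))
    (measurable_pi_lambda _ fun i => measurable_pi_apply (X := fun i => Sum.elim 𝒵 𝒵 (Subtype.val i)) _)
    ((measurable_pi_lambda (X := fun i : {i : Fin n // ¬(i : ℕ) < m} => 𝒵 i.1) _ fun i => measurable_pi_apply (X := fun i => Sum.elim 𝒵 𝒵 (Subtype.val i)) _).prodMk (g := fun v : (∀ i : (((univ.filter fun i : Fin n => ¬(i : ℕ) < m).image Sum.inl) ∪ {Sum.inr k} : Finset (Fin n ⊕ Fin n)), Sum.elim 𝒵 𝒵 i) => v ⟨Sum.inr k, Finset.mem_union_right _ (Finset.mem_singleton_self _)⟩) (measurable_pi_apply (X := fun i => Sum.elim 𝒵 𝒵 (Subtype.val i)) _))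
  exact h2

/-- `Z_k ⟂ (Z'_k, (Z_i)_{i>k})`. -/
lemma aux_indep_a (k : Fin n) :
    IndepFun (Z k) (fun ω => (Z' k ω, auxWhigh Z ((k : ℕ) + 1) ω)) P := by
  classical
  have h := hindep.indepFun_finset {Sum.inl k}
    ({Sum.inr k} ∪ ((univ.filter fun i : Fin n => ¬(i : ℕ) < (k : ℕ) + 1).image Sum.inl))
    (by
      simp only [Finset.disjoint_left, Finset.mem_singleton, Finset.mem_union, Finset.mem_image,
        Finset.mem_filter, Finset.mem_univ, true_and]
      rintro x rfl
      rintro (h | ⟨j, hj, hji⟩)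
      · cases h
      · cases Sum.inl_injective hji; omega)
    (fun x => aux_measurable_U' hZ hZ' x)
  exact h.comp (φ := fun v => v ⟨Sum.inl k, Finset.mem_singleton_self _⟩)
    (ψ := fun v => (v ⟨Sum.inr k, Finset.mem_union_left _ (Finset.mem_singleton_self _)⟩,
      fun i : {i : Fin n // ¬(i : ℕ) < (k : ℕ) + 1} =>
        v ⟨Sum.inl i.1, Finset.mem_union_right _ (Finset.mem_image_of_mem _ (by simpa using i.2))⟩))
    (measurable_pi_apply (X := fun i => Sum.elim 𝒵 𝒵 (Subtype.val i)) _)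
    ((measurable_pi_apply (X := fun i => Sum.elim 𝒵 𝒵 (Subtype.val i)) _).prodMk (measurable_pi_lambda (X := fun i : {i : Fin n // ¬(i : ℕ) < (k : ℕ) + 1} => 𝒵 i.1) _ fun i => measurable_pi_apply (X := fun i => Sum.elim 𝒵 𝒵 (Subtype.val i)) _))

/-- `Z'_k ⟂ (Z_k, (Z_i)_{i>k})`. -/
lemma aux_indep_c (k : Fin n) :
    IndepFun (Z' k) (fun ω => (Z k ω, auxWhigh Z ((k : ℕ) + 1) ω)) P := by
  classical
  have h := hindep.indepFun_finset {Sum.inr k}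
    ({Sum.inl k} ∪ ((univ.filter fun i : Fin n => ¬(i : ℕ) < (k : ℕ) + 1).image Sum.inl))
    (by
      simp only [Finset.disjoint_left, Finset.mem_singleton, Finset.mem_union, Finset.mem_image,
        Finset.mem_filter, Finset.mem_univ, true_and]
      rintro x rfl
      rintro (h | ⟨j, hj, hji⟩)
      · cases h
      · cases hji)
    (fun x => aux_measurable_U' hZ hZ' x)
  exact h.comp (φ := fun v => v ⟨Sum.inr k, Finset.mem_singleton_self _⟩)
    (ψ := fun v => (v ⟨Sum.inl k, Finset.mem_union_left _ (Finset.mem_singleton_self _)⟩,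
      fun i : {i : Fin n // ¬(i : ℕ) < (k : ℕ) + 1} =>
        v ⟨Sum.inl i.1, Finset.mem_union_right _ (Finset.mem_image_of_mem _ (by simpa using i.2))⟩))
    (measurable_pi_apply (X := fun i => Sum.elim 𝒵 𝒵 (Subtype.val i)) _)
    ((measurable_pi_apply (X := fun i => Sum.elim 𝒵 𝒵 (Subtype.val i)) _).prodMk (measurable_pi_lambda (X := fun i : {i : Fin n // ¬(i : ℕ) < (k : ℕ) + 1} => 𝒵 i.1) _ fun i => measurable_pi_apply (X := fun i => Sum.elim 𝒵 𝒵 (Subtype.val i)) _))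

/-- `Z'_k ⟂ (Z_i)_{i>k}`. -/
lemma aux_indep_b (k : Fin n) :
    IndepFun (Z' k) (auxWhigh Z ((k : ℕ) + 1)) P :=
  (aux_indep_c hindep hZ hZ' k).comp measurable_id measurable_snd

/-- `Z_k ⟂ (Z_i)_{i>k}`. -/
lemma aux_indep_d (k : Fin n) :
    IndepFun (Z k) (auxWhigh Z ((k : ℕ) + 1)) P :=
  (aux_indep_a hindep hZ hZ' k).comp measurable_id measurable_snd

/-- `Z_k ⟂ (Z_i)_{i≠k}` and `Z'_k ⟂ (Z_i)_{i≠k}`. -/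
lemma aux_indep_rest (k : Fin n) :
    IndepFun (Z k) (auxXrest Z k) P := by
  classical
  have h := hindep.indepFun_finset {Sum.inl k}
    ((univ.filter fun i : Fin n => i ≠ k).image Sum.inl)
    (by
      simp only [Finset.disjoint_left, Finset.mem_singleton, Finset.mem_image, Finset.mem_filter,
        Finset.mem_univ, true_and]
      rintro x rfl ⟨j, hj, hji⟩
      cases Sum.inl_injective hji; exact hj rfl)
    (fun x => aux_measurable_U' hZ hZ' x)
  exact h.comp (φ := fun v => v ⟨Sum.inl k, Finset.mem_singleton_self _⟩)
    (ψ := fun v => fun i : {i : Fin n // i ≠ k} =>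
      v ⟨Sum.inl i.1, Finset.mem_image_of_mem _ (by simpa using i.2)⟩)
    (measurable_pi_apply (X := fun i => Sum.elim 𝒵 𝒵 (Subtype.val i)) _)
    (measurable_pi_lambda _ fun i => measurable_pi_apply (X := fun i => Sum.elim 𝒵 𝒵 (Subtype.val i)) _)

lemma aux_indep_rest' (k : Fin n) :
    IndepFun (Z' k) (auxXrest Z k) P := by
  classical
  have h := hindep.indepFun_finset {Sum.inr k}
    ((univ.filter fun i : Fin n => i ≠ k).image Sum.inl)
    (by
      simp only [Finset.disjoint_left, Finset.mem_singleton, Finset.mem_image, Finset.mem_filter,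
        Finset.mem_univ, true_and]
      rintro x rfl ⟨j, hj, hji⟩
      cases hji)
    (fun x => aux_measurable_U' hZ hZ' x)
  exact h.comp (φ := fun v => v ⟨Sum.inr k, Finset.mem_singleton_self _⟩)
    (ψ := fun v => fun i : {i : Fin n // i ≠ k} =>
      v ⟨Sum.inl i.1, Finset.mem_image_of_mem _ (by simpa using i.2)⟩)
    (measurable_pi_apply (X := fun i => Sum.elim 𝒵 𝒵 (Subtype.val i)) _)
    (measurable_pi_lambda _ fun i => measurable_pi_apply (X := fun i => Sum.elim 𝒵 𝒵 (Subtype.val i)) _)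

end Indep

section Laws

variable {P : Measure Ω} [IsProbabilityMeasure P] {Z Z' : ∀ i : Fin n, Ω → 𝒵 i}

variable (hindep : iIndepFun (β := Sum.elim 𝒵 𝒵)
      (m := fun x => Sum.rec (motive := fun x => MeasurableSpace (Sum.elim 𝒵 𝒵 x))
        (fun i => (inferInstance : MeasurableSpace (𝒵 i)))
        (fun i => (inferInstance : MeasurableSpace (𝒵 i))) x)
      (fun x => Sum.rec (motive := fun x => Ω → Sum.elim 𝒵 𝒵 x) Z Z' x) P)
  (hZ : ∀ i, Measurable (Z i)) (hZ' : ∀ i, Measurable (Z' i))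
  (hcopy : ∀ i, IdentDistrib (Z' i) (Z i) P P)

include hindep hZ hZ' hcopy

lemma aux_law_triple_swap (k : Fin n) :
    P.map (fun ω => (Z k ω, (Z' k ω, auxWhigh Z ((k : ℕ) + 1) ω)))
      = P.map (fun ω => (Z' k ω, (Z k ω, auxWhigh Z ((k : ℕ) + 1) ω))) := by
  have mW : Measurable (auxWhigh Z ((k : ℕ) + 1)) := measurable_auxWhigh Z hZ _
  rw [(indepFun_iff_map_prod_eq_prod_map_map (hZ k).aemeasurable
      ((hZ' k).prodMk mW).aemeasurable).mp (aux_indep_a hindep hZ hZ' k),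
    (indepFun_iff_map_prod_eq_prod_map_map (hZ' k).aemeasurable
      ((hZ k).prodMk mW).aemeasurable).mp (aux_indep_c hindep hZ hZ' k),
    (indepFun_iff_map_prod_eq_prod_map_map (hZ' k).aemeasurable
      mW.aemeasurable).mp (aux_indep_b hindep hZ hZ' k),
    (indepFun_iff_map_prod_eq_prod_map_map (hZ k).aemeasurable
      mW.aemeasurable).mp (aux_indep_d hindep hZ hZ' k),
    (hcopy k).map_eq]

lemma aux_law_WZ' (k : Fin n) :
    P.map (fun ω => (auxWhigh Z ((k : ℕ) + 1) ω, Z' k ω))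
      = (P.map (auxWhigh Z ((k : ℕ) + 1))).prod (P.map (Z k)) := by
  have mW : Measurable (auxWhigh Z ((k : ℕ) + 1)) := measurable_auxWhigh Z hZ _
  rw [(indepFun_iff_map_prod_eq_prod_map_map mW.aemeasurable
      (hZ' k).aemeasurable).mp (aux_indep_b hindep hZ hZ' k).symm, (hcopy k).map_eq]

lemma aux_law_ZW (k : Fin n) :
    P.map (fun ω => (Z k ω, auxWhigh Z ((k : ℕ) + 1) ω))
      = (P.map (Z k)).prod (P.map (auxWhigh Z ((k : ℕ) + 1))) :=
  (indepFun_iff_map_prod_eq_prod_map_map (hZ k).aemeasurable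
      (measurable_auxWhigh Z hZ _).aemeasurable).mp (aux_indep_d hindep hZ hZ' k)

lemma aux_law_rep (k : Fin n) :
    P.map (sampleRepDep Z Z' k) = P.map (sampleDep Z) := by
  have mθ : Measurable (fun p : 𝒵 k × (∀ i : {i : Fin n // i ≠ k}, 𝒵 i) =>
      auxTheta k p.1 p.2) := measurable_auxTheta k
  have mX : Measurable (auxXrest Z k) := measurable_auxXrest Z hZ k
  have e1 : sampleDep Z = (fun p : 𝒵 k × _ => auxTheta k p.1 p.2)
      ∘ (fun ω => (Z k ω, auxXrest Z k ω)) := funext fun ω => auxTheta_sample Z Z' k ω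
  have e2 : sampleRepDep Z Z' k = (fun p : 𝒵 k × _ => auxTheta k p.1 p.2)
      ∘ (fun ω => (Z' k ω, auxXrest Z k ω)) := funext fun ω => auxTheta_sampleRep Z Z' k ω
  rw [e1, e2, ← Measure.map_map mθ ((hZ' k).prodMk mX), ← Measure.map_map mθ
    ((hZ k).prodMk mX),
    (indepFun_iff_map_prod_eq_prod_map_map (hZ' k).aemeasurable mX.aemeasurable).mp
      (aux_indep_rest' hindep hZ hZ' k),
    (indepFun_iff_map_prod_eq_prod_map_map (hZ k).aemeasurable mX.aemeasurable).mp
      (aux_indep_rest hindep hZ hZ' k),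
    (hcopy k).map_eq]

omit hindep hZ hZ' hcopy in
lemma measurable_sampleRepDep (hZ : ∀ i, Measurable (Z i)) (hZ' : ∀ i, Measurable (Z' i))
    (k : Fin n) : Measurable (sampleRepDep Z Z' k) := by
  have : sampleRepDep Z Z' k = (fun p : 𝒵 k × _ => auxTheta k p.1 p.2)
      ∘ (fun ω => (Z' k ω, auxXrest Z k ω)) := funext fun ω => auxTheta_sampleRep Z Z' k ω
  rw [this]
  exact (measurable_auxTheta k).comp ((hZ' k).prodMk (measurable_auxXrest Z hZ k))

lemma aux_memLp_rep {f : (∀ i, 𝒵 i) → ℝ} (hf : Measurable f)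
    (hsq : MemLp (fun ω => f (sampleDep Z ω)) 2 P) (k : Fin n) :
    MemLp (fun ω => f (sampleRepDep Z Z' k ω)) 2 P := by
  have h1 : MemLp f 2 (P.map (sampleDep Z)) :=
    (memLp_map_measure_iff hf.aestronglyMeasurable
      (measurable_sampleDep Z hZ).aemeasurable).mpr hsq
  rw [← aux_law_rep hindep hZ hZ' hcopy k] at h1
  exact (memLp_map_measure_iff hf.aestronglyMeasurable
    (measurable_sampleRepDep hZ hZ' k).aemeasurable).mp h1

end Laws

/-! ### Elementary real inequalities -/

lemma aux_half (l y : ℝ) : l * y - l ^ 2 / 2 * y ^ 2 ≤ 1 / 2 := by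
  nlinarith [sq_nonneg (l * y - 1)]

lemma aux_exp_two (u : ℝ) :
    Real.exp (u - u ^ 2 / 2) + Real.exp (-u - u ^ 2 / 2) ≤ 2 := by
  have h1 : Real.exp (u - u ^ 2 / 2) + Real.exp (-u - u ^ 2 / 2)
      = 2 * Real.cosh u * Real.exp (-(u ^ 2 / 2)) := by
    rw [Real.cosh_eq]
    rw [sub_eq_add_neg, sub_eq_add_neg, Real.exp_add, Real.exp_add]
    ring
  rw [h1]
  have h2 : Real.cosh u ≤ Real.exp (u ^ 2 / 2) := Real.cosh_le_exp_half_sq u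
  have h3 : (0:ℝ) < Real.exp (-(u ^ 2 / 2)) := Real.exp_pos _
  calc 2 * Real.cosh u * Real.exp (-(u ^ 2 / 2))
      ≤ 2 * Real.exp (u ^ 2 / 2) * Real.exp (-(u ^ 2 / 2)) := by nlinarith
    _ = 2 := by rw [mul_assoc, ← Real.exp_add]; simp

/-! ### The difference function and its properties -/

def auxF (f : (∀ i, 𝒵 i) → ℝ) (k : Fin n) (m : ℕ)
    (p : (∀ i : {i : Fin n // (i : ℕ) < m}, 𝒵 i) ×
      ((∀ i : {i : Fin n // ¬(i : ℕ) < m}, 𝒵 i) × 𝒵 k)) : ℝ :=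
  f (auxGlue m p.1 p.2.1) - f (Function.update (auxGlue m p.1 p.2.1) k p.2.2)

lemma measurable_auxF {f : (∀ i, 𝒵 i) → ℝ} (hf : Measurable f) (k : Fin n) (m : ℕ) :
    Measurable (auxF f k m) := by
  have h1 : Measurable fun p : (∀ i : {i : Fin n // (i : ℕ) < m}, 𝒵 i) ×
      ((∀ i : {i : Fin n // ¬(i : ℕ) < m}, 𝒵 i) × 𝒵 k) => auxGlue m p.1 p.2.1 :=
    (measurable_auxGlue m).comp (measurable_fst.prodMk (measurable_fst.comp measurable_snd))
  have h2 : Measurable fun p : (∀ i : {i : Fin n // (i : ℕ) < m}, 𝒵 i) ×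
      ((∀ i : {i : Fin n // ¬(i : ℕ) < m}, 𝒵 i) × 𝒵 k) =>
      Function.update (auxGlue m p.1 p.2.1) k p.2.2 :=
    measurable_update'.comp (h1.prodMk (measurable_snd.comp measurable_snd))
  exact (hf.comp h1).sub (hf.comp h2)

lemma auxF_eval (Z Z' : ∀ i : Fin n, Ω → 𝒵 i) (f : (∀ i, 𝒵 i) → ℝ) (k : Fin n) (m : ℕ)
    (ω : Ω) :
    auxF f k m (auxXlow Z m ω, (auxWhigh Z m ω, Z' k ω))
      = f (sampleDep Z ω) - f (sampleRepDep Z Z' k ω) := by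
  simp only [auxF, auxGlue_eq_sample, sampleRepDep]

/-! ### Generic conditional-expectation identification -/

section CondexpId

variable {P : Measure Ω} [IsProbabilityMeasure P] {Z Z' : ∀ i : Fin n, Ω → 𝒵 i}

variable (hindep : iIndepFun (β := Sum.elim 𝒵 𝒵)
      (m := fun x => Sum.rec (motive := fun x => MeasurableSpace (Sum.elim 𝒵 𝒵 x))
        (fun i => (inferInstance : MeasurableSpace (𝒵 i)))
        (fun i => (inferInstance : MeasurableSpace (𝒵 i))) x)
      (fun x => Sum.rec (motive := fun x => Ω → Sum.elim 𝒵 𝒵 x) Z Z' x) P)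
  (hZ : ∀ i, Measurable (Z i)) (hZ' : ∀ i, Measurable (Z' i))
  (hcopy : ∀ i, IdentDistrib (Z' i) (Z i) P P)

include hindep hZ hZ'

lemma aux_condexp_eq (m : ℕ) (k : Fin n)
    {φ : (∀ i : {i : Fin n // (i : ℕ) < m}, 𝒵 i) ×
      ((∀ i : {i : Fin n // ¬(i : ℕ) < m}, 𝒵 i) × 𝒵 k) → ℝ}
    (hφ : Measurable φ)
    (hint : Integrable (fun ω => φ (auxXlow Z m ω, (auxWhigh Z m ω, Z' k ω))) P) :
    P[fun ω => φ (auxXlow Z m ω, (auxWhigh Z m ω, Z' k ω)) | filtDep Z m]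
      =ᵐ[P] fun ω => ∫ y, φ (auxXlow Z m ω, y)
        ∂(P.map (fun ω' => (auxWhigh Z m ω', Z' k ω'))) := by
  rw [← comap_auxXlow Z m]
  exact condexp_indepFun_integral (measurable_auxXlow Z hZ m)
    ((measurable_auxWhigh Z hZ m).prodMk (hZ' k))
    (aux_indep_low_highZ' hindep hZ hZ' m k) hφ hint

include hcopy

lemma aux_Y_memLp {f : (∀ i, 𝒵 i) → ℝ} (hf : Measurable f)
    (hsq : MemLp (fun ω => f (sampleDep Z ω)) 2 P) (k : Fin n) :
    MemLp (fun ω => f (sampleDep Z ω) - f (sampleRepDep Z Z' k ω)) 2 P :=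
  hsq.sub (aux_memLp_rep hindep hZ hZ' hcopy hf hsq k)

lemma aux_g_int {f : (∀ i, 𝒵 i) → ℝ} (hf : Measurable f)
    (hsq : MemLp (fun ω => f (sampleDep Z ω)) 2 P) (k : Fin n) (l : ℝ) :
    Integrable (fun ω => l * (f (sampleDep Z ω) - f (sampleRepDep Z Z' k ω))
      - l ^ 2 / 2 * (f (sampleDep Z ω) - f (sampleRepDep Z Z' k ω)) ^ 2) P := by
  have hY := aux_Y_memLp hindep hZ hZ' hcopy hf hsq k
  exact ((hY.integrable one_le_two).const_mul l).sub (hY.integrable_sq.const_mul (l ^ 2 / 2))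

end CondexpId

/-! ### The exponential integrand -/

noncomputable def auxPhiK (f : (∀ i, 𝒵 i) → ℝ) (l : ℝ) (k : Fin n) (m : ℕ)
    (p : (∀ i : {i : Fin n // (i : ℕ) < m}, 𝒵 i) ×
      ((∀ i : {i : Fin n // ¬(i : ℕ) < m}, 𝒵 i) × 𝒵 k)) : ℝ :=
  Real.exp (l * auxF f k m p - l ^ 2 / 2 * auxF f k m p ^ 2)

lemma measurable_auxPhiK {f : (∀ i, 𝒵 i) → ℝ} (hf : Measurable f) (l : ℝ) (k : Fin n)
    (m : ℕ) : Measurable (auxPhiK f l k m) :=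
  Real.measurable_exp.comp (((measurable_auxF hf k m).const_mul l).sub
    (((measurable_auxF hf k m).pow_const 2).const_mul (l ^ 2 / 2)))

lemma auxPhiK_nonneg (f : (∀ i, 𝒵 i) → ℝ) (l : ℝ) (k : Fin n) (m : ℕ) (p) :
    0 ≤ auxPhiK f l k m p := (Real.exp_pos _).le

lemma auxPhiK_le (f : (∀ i, 𝒵 i) → ℝ) (l : ℝ) (k : Fin n) (m : ℕ) (p) :
    auxPhiK f l k m p ≤ Real.exp (1 / 2) :=
  Real.exp_le_exp.mpr (aux_half l _)

lemma aux_F_ext {f : (∀ i, 𝒵 i) → ℝ} (k : Fin n)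
    (x : ∀ i : {i : Fin n // (i : ℕ) < (k : ℕ)}, 𝒵 i) (a b : 𝒵 k)
    (v : ∀ i : {i : Fin n // ¬(i : ℕ) < (k : ℕ) + 1}, 𝒵 i) :
    auxF f k (k : ℕ) (x, (auxExt k a v, b))
      = f (auxGlue (k : ℕ) x (auxExt k a v)) - f (auxGlue (k : ℕ) x (auxExt k b v)) := by
  rw [auxF, auxExt_update]

section SymK

variable {P : Measure Ω} [IsProbabilityMeasure P] {Z Z' : ∀ i : Fin n, Ω → 𝒵 i}

variable (hindep : iIndepFun (β := Sum.elim 𝒵 𝒵)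
      (m := fun x => Sum.rec (motive := fun x => MeasurableSpace (Sum.elim 𝒵 𝒵 x))
        (fun i => (inferInstance : MeasurableSpace (𝒵 i)))
        (fun i => (inferInstance : MeasurableSpace (𝒵 i))) x)
      (fun x => Sum.rec (motive := fun x => Ω → Sum.elim 𝒵 𝒵 x) Z Z' x) P)
  (hZ : ∀ i, Measurable (Z i)) (hZ' : ∀ i, Measurable (Z' i))
  (hcopy : ∀ i, IdentDistrib (Z' i) (Z i) P P)

include hindep hZ hZ' hcopy

/-- The symmetrization bound: the conditional expectation of
`exp(l·Y_k − l²/2·Y_k²)` given `F_k` is at most 1. -/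
lemma aux_K {f : (∀ i, 𝒵 i) → ℝ} (hf : Measurable f) (l : ℝ) (k : Fin n) :
    P[fun ω => Real.exp (l * (f (sampleDep Z ω) - f (sampleRepDep Z Z' k ω))
        - l ^ 2 / 2 * (f (sampleDep Z ω) - f (sampleRepDep Z Z' k ω)) ^ 2) | filtDep Z (k : ℕ)]
      ≤ᵐ[P] fun _ => 1 := by
  have hfun : (fun ω => Real.exp (l * (f (sampleDep Z ω) - f (sampleRepDep Z Z' k ω))
      - l ^ 2 / 2 * (f (sampleDep Z ω) - f (sampleRepDep Z Z' k ω)) ^ 2))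
      = fun ω => auxPhiK f l k (k : ℕ)
          (auxXlow Z (k : ℕ) ω, (auxWhigh Z (k : ℕ) ω, Z' k ω)) := by
    funext ω
    rw [auxPhiK, auxF_eval]
  have hint : Integrable (fun ω => auxPhiK f l k (k : ℕ)
      (auxXlow Z (k : ℕ) ω, (auxWhigh Z (k : ℕ) ω, Z' k ω))) P := by
    refine Integrable.mono' (integrable_const (Real.exp (1 / 2)))
      ((measurable_auxPhiK hf l k _).comp ((measurable_auxXlow Z hZ _).prodMk
        ((measurable_auxWhigh Z hZ _).prodMk (hZ' k)))).aestronglyMeasurable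
      (ae_of_all _ fun ω => ?_)
    rw [Real.norm_eq_abs, abs_of_nonneg (auxPhiK_nonneg f l k _ _)]
    exact auxPhiK_le f l k _ _
  have hce := aux_condexp_eq hindep hZ hZ' (k : ℕ) k (measurable_auxPhiK hf l k _) hint
  rw [hfun]
  -- the key pointwise bound
  have claim : ∀ x, ∫ y, auxPhiK f l k (k : ℕ) (x, y)
      ∂(P.map (fun ω' => (auxWhigh Z (k : ℕ) ω', Z' k ω'))) ≤ 1 := by
    intro x
    set ρ₃ := P.map (fun ω => (Z k ω, (Z' k ω, auxWhigh Z ((k : ℕ) + 1) ω))) with hρ₃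
    have mtrip : Measurable (fun ω => (Z k ω, (Z' k ω, auxWhigh Z ((k : ℕ) + 1) ω))) :=
      (hZ k).prodMk ((hZ' k).prodMk (measurable_auxWhigh Z hZ _))
    haveI : IsProbabilityMeasure ρ₃ := Measure.isProbabilityMeasure_map mtrip.aemeasurable
    have mΨ : Measurable (fun r : 𝒵 k × (𝒵 k × ∀ i : {i : Fin n // ¬(i : ℕ) < (k : ℕ) + 1}, 𝒵 i)
        => ((auxExt k r.1 r.2.2 : ∀ i : {i : Fin n // ¬(i : ℕ) < (k : ℕ)}, 𝒵 i), r.2.1)) :=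
      ((measurable_auxExt k).comp (measurable_fst.prodMk
        (measurable_snd.comp measurable_snd))).prodMk (measurable_fst.comp measurable_snd)
    have hmap : P.map (fun ω' => (auxWhigh Z (k : ℕ) ω', Z' k ω'))
        = ρ₃.map (fun r => (auxExt k r.1 r.2.2, r.2.1)) := by
      rw [hρ₃, Measure.map_map mΨ mtrip]
      congr 1
      funext ω
      show _ = (auxExt k (Z k ω) (auxWhigh Z ((k : ℕ) + 1) ω), Z' k ω)
      rw [← auxWhigh_eq_ext]
    rw [hmap]
    have mgx : AEStronglyMeasurable (fun y => auxPhiK f l k (k : ℕ) (x, y))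
        (Measure.map (fun r : 𝒵 k × (𝒵 k × ∀ i : {i : Fin n // ¬(i : ℕ) < (k : ℕ) + 1}, 𝒵 i)
          => ((auxExt k r.1 r.2.2 : ∀ i : {i : Fin n // ¬(i : ℕ) < (k : ℕ)}, 𝒵 i), r.2.1)) ρ₃) :=
      ((measurable_auxPhiK hf l k _).comp measurable_prodMk_left).aestronglyMeasurable
    rw [integral_map mΨ.aemeasurable mgx]
    set G : 𝒵 k × (𝒵 k × ∀ i : {i : Fin n // ¬(i : ℕ) < (k : ℕ) + 1}, 𝒵 i) → ℝ :=
      fun r => auxPhiK f l k (k : ℕ) (x, (auxExt k r.1 r.2.2, r.2.1)) with hG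
    have mG : Measurable G :=
      (measurable_auxPhiK hf l k _).comp (measurable_prodMk_left.comp mΨ)
    have mσ : Measurable (fun r : 𝒵 k × (𝒵 k × ∀ i : {i : Fin n // ¬(i : ℕ) < (k : ℕ) + 1}, 𝒵 i)
        => (r.2.1, (r.1, r.2.2))) :=
      (measurable_fst.comp measurable_snd).prodMk
        (measurable_fst.prodMk (measurable_snd.comp measurable_snd))
    have hσρ : ρ₃.map (fun r => (r.2.1, (r.1, r.2.2))) = ρ₃ := by
      rw [hρ₃, Measure.map_map mσ mtrip]
      exact (aux_law_triple_swap hindep hZ hZ' hcopy k).symm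
    have hGσ : ∫ r, G (r.2.1, (r.1, r.2.2)) ∂ρ₃ = ∫ r, G r ∂ρ₃ := by
      rw [← integral_map mσ.aemeasurable mG.aestronglyMeasurable, hσρ]
    have hGint : Integrable G ρ₃ := by
      refine Integrable.mono' (integrable_const (Real.exp (1 / 2)))
        mG.aestronglyMeasurable (ae_of_all _ fun r => ?_)
      rw [Real.norm_eq_abs, abs_of_nonneg (auxPhiK_nonneg f l k _ _)]
      exact auxPhiK_le f l k _ _
    have hGσint : Integrable (fun r => G (r.2.1, (r.1, r.2.2))) ρ₃ := by
      refine Integrable.mono' (integrable_const (Real.exp (1 / 2)))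
        (mG.comp mσ).aestronglyMeasurable (ae_of_all _ fun r => ?_)
      rw [Real.norm_eq_abs, abs_of_nonneg (auxPhiK_nonneg f l k _ _)]
      exact auxPhiK_le f l k _ _
    have hpt : ∀ r, G r + G (r.2.1, (r.1, r.2.2)) ≤ 2 := by
      rintro ⟨a, b, v⟩
      have e1 : auxF f k (k : ℕ) (x, (auxExt k a v, b))
          = f (auxGlue (k : ℕ) x (auxExt k a v)) - f (auxGlue (k : ℕ) x (auxExt k b v)) :=
        aux_F_ext k x a b v
      have e2 : auxF f k (k : ℕ) (x, (auxExt k b v, a))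
          = f (auxGlue (k : ℕ) x (auxExt k b v)) - f (auxGlue (k : ℕ) x (auxExt k a v)) :=
        aux_F_ext k x b a v
      set u := l * (f (auxGlue (k : ℕ) x (auxExt k a v)) - f (auxGlue (k : ℕ) x (auxExt k b v)))
        with hu
      have h1 : G (a, (b, v)) = Real.exp (u - u ^ 2 / 2) := by
        rw [hG]
        simp only [auxPhiK]
        rw [e1]
        congr 1
        ring
      have h2 : G ((a, (b, v)).2.1, ((a, (b, v)).1, (a, (b, v)).2.2))
          = Real.exp (-u - u ^ 2 / 2) := by
        rw [hG]
        simp only [auxPhiK]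
        rw [e2]
        congr 1
        ring
      rw [h1, h2]
      exact aux_exp_two u
    have h2G : 2 * ∫ r, G r ∂ρ₃ ≤ 2 := by
      have : (2 : ℝ) * ∫ r, G r ∂ρ₃ = ∫ r, (G r + G (r.2.1, (r.1, r.2.2))) ∂ρ₃ := by
        rw [integral_add hGint hGσint, hGσ]
        ring
      rw [this]
      calc ∫ r, (G r + G (r.2.1, (r.1, r.2.2))) ∂ρ₃ ≤ ∫ _, (2 : ℝ) ∂ρ₃ :=
            integral_mono (hGint.add hGσint) (integrable_const 2) hpt
        _ = 2 := by simp
    linarith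
  filter_upwards [hce] with ω hω
  rw [hω]
  exact claim _

end SymK

lemma measurable_auxGlue_right (m : ℕ) (x : ∀ i : {i : Fin n // (i : ℕ) < m}, 𝒵 i) :
    Measurable fun w : (∀ i : {i : Fin n // ¬(i : ℕ) < m}, 𝒵 i) => auxGlue m x w :=
  (measurable_auxGlue m).comp measurable_prodMk_left


noncomputable def auxG (f : (∀ i, 𝒵 i) → ℝ) (l : ℝ) (k : Fin n) (m : ℕ)
    (p : (∀ i : {i : Fin n // (i : ℕ) < m}, 𝒵 i) ×
      ((∀ i : {i : Fin n // ¬(i : ℕ) < m}, 𝒵 i) × 𝒵 k)) : ℝ :=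
  l * auxF f k m p - l ^ 2 / 2 * auxF f k m p ^ 2

lemma measurable_auxG {f : (∀ i, 𝒵 i) → ℝ} (hf : Measurable f) (l : ℝ) (k : Fin n) (m : ℕ) :
    Measurable (auxG f l k m) :=
  ((measurable_auxF hf k m).const_mul l).sub
    (((measurable_auxF hf k m).pow_const 2).const_mul (l ^ 2 / 2))

section JensenL

variable {P : Measure Ω} [IsProbabilityMeasure P] {Z Z' : ∀ i : Fin n, Ω → 𝒵 i}

variable (hindep : iIndepFun (β := Sum.elim 𝒵 𝒵)
      (m := fun x => Sum.rec (motive := fun x => MeasurableSpace (Sum.elim 𝒵 𝒵 x))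
        (fun i => (inferInstance : MeasurableSpace (𝒵 i)))
        (fun i => (inferInstance : MeasurableSpace (𝒵 i))) x)
      (fun x => Sum.rec (motive := fun x => Ω → Sum.elim 𝒵 𝒵 x) Z Z' x) P)
  (hZ : ∀ i, Measurable (Z i)) (hZ' : ∀ i, Measurable (Z' i))
  (hcopy : ∀ i, IdentDistrib (Z' i) (Z i) P P)

include hindep hZ hZ' hcopy

/-- Conditional Jensen for our specific situation. -/
lemma aux_J {f : (∀ i, 𝒵 i) → ℝ} (hf : Measurable f)
    (hsq : MemLp (fun ω => f (sampleDep Z ω)) 2 P) (l : ℝ) (k : Fin n) :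
    ∀ᵐ ω ∂P, Real.exp ((P[fun ω' => l * (f (sampleDep Z ω') - f (sampleRepDep Z Z' k ω'))
        - l ^ 2 / 2 * (f (sampleDep Z ω') - f (sampleRepDep Z Z' k ω')) ^ 2 |
          filtDep Z ((k : ℕ) + 1)]) ω)
      ≤ (P[fun ω' => Real.exp (l * (f (sampleDep Z ω') - f (sampleRepDep Z Z' k ω'))
        - l ^ 2 / 2 * (f (sampleDep Z ω') - f (sampleRepDep Z Z' k ω')) ^ 2) |
          filtDep Z ((k : ℕ) + 1)]) ω := by
  set m := (k : ℕ) + 1 with hm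
  have hfun1 : (fun ω' => l * (f (sampleDep Z ω') - f (sampleRepDep Z Z' k ω'))
      - l ^ 2 / 2 * (f (sampleDep Z ω') - f (sampleRepDep Z Z' k ω')) ^ 2)
      = fun ω' => auxG f l k m (auxXlow Z m ω', (auxWhigh Z m ω', Z' k ω')) := by
    funext ω'
    rw [auxG, auxF_eval]
  have hfun2 : (fun ω' => Real.exp (l * (f (sampleDep Z ω') - f (sampleRepDep Z Z' k ω'))
      - l ^ 2 / 2 * (f (sampleDep Z ω') - f (sampleRepDep Z Z' k ω')) ^ 2))
      = fun ω' => auxPhiK f l k m (auxXlow Z m ω', (auxWhigh Z m ω', Z' k ω')) := by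
    funext ω'
    rw [auxPhiK, auxF_eval]
  have hint1 : Integrable (fun ω' => auxG f l k m
      (auxXlow Z m ω', (auxWhigh Z m ω', Z' k ω'))) P := by
    rw [← hfun1]
    exact aux_g_int hindep hZ hZ' hcopy hf hsq k l
  have hint2 : Integrable (fun ω' => auxPhiK f l k m
      (auxXlow Z m ω', (auxWhigh Z m ω', Z' k ω'))) P := by
    refine Integrable.mono' (integrable_const (Real.exp (1 / 2)))
      ((measurable_auxPhiK hf l k _).comp ((measurable_auxXlow Z hZ _).prodMk
        ((measurable_auxWhigh Z hZ _).prodMk (hZ' k)))).aestronglyMeasurable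
      (ae_of_all _ fun ω => ?_)
    rw [Real.norm_eq_abs, abs_of_nonneg (auxPhiK_nonneg f l k _ _)]
    exact auxPhiK_le f l k _ _
  have hce1 := aux_condexp_eq hindep hZ hZ' m k (measurable_auxG hf l k m) hint1
  have hce2 := aux_condexp_eq hindep hZ hZ' m k (measurable_auxPhiK hf l k m) hint2
  set ρ := P.map (fun ω' => (auxWhigh Z m ω', Z' k ω')) with hρ
  haveI : IsProbabilityMeasure ρ :=
    Measure.isProbabilityMeasure_map ((measurable_auxWhigh Z hZ _).prodMk (hZ' k)).aemeasurable
  -- a.e. integrability of sections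
  have hprod : P.map (fun ω' => (auxXlow Z m ω', (auxWhigh Z m ω', Z' k ω')))
      = (P.map (auxXlow Z m)).prod ρ :=
    (indepFun_iff_map_prod_eq_prod_map_map (measurable_auxXlow Z hZ m).aemeasurable
      ((measurable_auxWhigh Z hZ m).prodMk (hZ' k)).aemeasurable).mp
      (aux_indep_low_highZ' hindep hZ hZ' m k)
  have hint_map : Integrable (auxG f l k m) ((P.map (auxXlow Z m)).prod ρ) := by
    rw [← hprod]
    rw [integrable_map_measure (measurable_auxG hf l k m).aestronglyMeasurable
      ((measurable_auxXlow Z hZ m).prodMk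
        ((measurable_auxWhigh Z hZ m).prodMk (hZ' k))).aemeasurable]
    exact hint1
  have hsec : ∀ᵐ x ∂(P.map (auxXlow Z m)), Integrable (fun y => auxG f l k m (x, y)) ρ :=
    hint_map.prod_right_ae
  have hsec' : ∀ᵐ ω ∂P, Integrable (fun y => auxG f l k m (auxXlow Z m ω, y)) ρ :=
    ae_of_ae_map (measurable_auxXlow Z hZ m).aemeasurable hsec
  rw [hfun1, hfun2]
  filter_upwards [hce1, hce2, hsec'] with ω h1 h2 hs
  rw [h1, h2]
  have hjen : Real.exp (∫ y, auxG f l k m (auxXlow Z m ω, y) ∂ρ)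
      ≤ ∫ y, Real.exp (auxG f l k m (auxXlow Z m ω, y)) ∂ρ := by
    refine convexOn_exp.map_integral_le continuous_exp.continuousOn isClosed_univ
      (ae_of_all _ fun _ => Set.mem_univ _) hs ?_
    refine Integrable.mono' (integrable_const (Real.exp (1 / 2)))
      (Real.measurable_exp.comp ((measurable_auxG hf l k m).comp
        measurable_prodMk_left)).aestronglyMeasurable (ae_of_all _ fun y => ?_)
    rw [Function.comp_apply, Real.norm_eq_abs, abs_of_nonneg (Real.exp_pos _).le]
    exact Real.exp_le_exp.mpr (aux_half l _)
  exact hjen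

/-- The martingale identification: `E[f(S^{(k)}) | F_{k+1}] = E[f(S) | F_k]`. -/
lemma aux_L {f : (∀ i, 𝒵 i) → ℝ} (hf : Measurable f)
    (hsq : MemLp (fun ω => f (sampleDep Z ω)) 2 P) (k : Fin n) :
    P[fun ω => f (sampleRepDep Z Z' k ω) | filtDep Z ((k : ℕ) + 1)]
      =ᵐ[P] P[fun ω => f (sampleDep Z ω) | filtDep Z (k : ℕ)] := by
  -- identify the left side
  have hfunL : (fun ω => f (sampleRepDep Z Z' k ω))
      = fun ω => (fun p : (∀ i : {i : Fin n // (i : ℕ) < (k : ℕ) + 1}, 𝒵 i) ×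
          ((∀ i : {i : Fin n // ¬(i : ℕ) < (k : ℕ) + 1}, 𝒵 i) × 𝒵 k) =>
          f (Function.update (auxGlue ((k : ℕ) + 1) p.1 p.2.1) k p.2.2))
        (auxXlow Z ((k : ℕ) + 1) ω, (auxWhigh Z ((k : ℕ) + 1) ω, Z' k ω)) := by
    funext ω
    show f (sampleRepDep Z Z' k ω) = f (Function.update
      (auxGlue ((k : ℕ) + 1) (auxXlow Z ((k : ℕ) + 1) ω) (auxWhigh Z ((k : ℕ) + 1) ω)) k
      (Z' k ω))
    rw [auxGlue_eq_sample]
    rfl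
  have hfunR : (fun ω => f (sampleDep Z ω))
      = fun ω => (fun p : (∀ i : {i : Fin n // (i : ℕ) < (k : ℕ)}, 𝒵 i) ×
          ((∀ i : {i : Fin n // ¬(i : ℕ) < (k : ℕ)}, 𝒵 i) × 𝒵 k) =>
          f (auxGlue (k : ℕ) p.1 p.2.1))
        (auxXlow Z (k : ℕ) ω, (auxWhigh Z (k : ℕ) ω, Z' k ω)) := by
    funext ω
    show f (sampleDep Z ω) = f (auxGlue (k : ℕ) (auxXlow Z (k : ℕ) ω) (auxWhigh Z (k : ℕ) ω))
    rw [auxGlue_eq_sample]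
  have mφL : Measurable (fun p : (∀ i : {i : Fin n // (i : ℕ) < (k : ℕ) + 1}, 𝒵 i) ×
      ((∀ i : {i : Fin n // ¬(i : ℕ) < (k : ℕ) + 1}, 𝒵 i) × 𝒵 k) =>
      f (Function.update (auxGlue ((k : ℕ) + 1) p.1 p.2.1) k p.2.2)) := by
    refine hf.comp (measurable_update'.comp (Measurable.prodMk ?_
      (measurable_snd.comp measurable_snd)))
    exact (measurable_auxGlue _).comp
      (measurable_fst.prodMk (measurable_fst.comp measurable_snd))
  have mφR : Measurable (fun p : (∀ i : {i : Fin n // (i : ℕ) < (k : ℕ)}, 𝒵 i) ×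
      ((∀ i : {i : Fin n // ¬(i : ℕ) < (k : ℕ)}, 𝒵 i) × 𝒵 k) =>
      f (auxGlue (k : ℕ) p.1 p.2.1)) :=
    hf.comp ((measurable_auxGlue _).comp
      (measurable_fst.prodMk (measurable_fst.comp measurable_snd)))
  have hintL : Integrable (fun ω => f (sampleRepDep Z Z' k ω)) P :=
    (aux_memLp_rep hindep hZ hZ' hcopy hf hsq k).integrable one_le_two
  have hintR : Integrable (fun ω => f (sampleDep Z ω)) P := hsq.integrable one_le_two
  have hce1 := aux_condexp_eq hindep hZ hZ' ((k : ℕ) + 1) k mφL (hfunL ▸ hintL)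
  have hce2 := aux_condexp_eq hindep hZ hZ' (k : ℕ) k mφR (hfunR ▸ hintR)
  rw [hfunL, hfunR]
  refine hce1.trans (Filter.EventuallyEq.trans (Filter.EventuallyEq.of_eq (funext fun ω => ?_)) hce2.symm)
  -- pointwise equality of the two explicit integrals
  show ∫ y, f (Function.update (auxGlue ((k : ℕ) + 1) (auxXlow Z ((k : ℕ) + 1) ω) y.1) k y.2)
      ∂(P.map fun ω' => (auxWhigh Z ((k : ℕ) + 1) ω', Z' k ω'))
    = ∫ y, f (auxGlue (k : ℕ) (auxXlow Z (k : ℕ) ω) y.1)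
      ∂(P.map fun ω' => (auxWhigh Z (k : ℕ) ω', Z' k ω'))
  -- LHS: rewrite the integrand using `auxUpdate_glue` and `auxRestr`
  have hLHS : ∀ y : (∀ i : {i : Fin n // ¬(i : ℕ) < (k : ℕ) + 1}, 𝒵 i) × 𝒵 k,
      f (Function.update (auxGlue ((k : ℕ) + 1) (auxXlow Z ((k : ℕ) + 1) ω) y.1) k y.2)
        = f (auxGlue (k : ℕ) (auxXlow Z (k : ℕ) ω) (auxExt k y.2 y.1)) := by
    intro y
    rw [auxUpdate_glue]
    rfl
  simp only [hLHS]
  -- both sides are integrals against product measures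
  rw [aux_law_WZ' hindep hZ hZ' hcopy k]
  -- RHS: the integrand only depends on the first coordinate
  have hR : ∫ y, f (auxGlue (k : ℕ) (auxXlow Z (k : ℕ) ω) y.1)
      ∂(P.map fun ω' => (auxWhigh Z (k : ℕ) ω', Z' k ω'))
      = ∫ w, f (auxGlue (k : ℕ) (auxXlow Z (k : ℕ) ω) w) ∂(P.map (auxWhigh Z (k : ℕ))) := by
    have hcomp : P.map (auxWhigh Z (k : ℕ))
        = (P.map fun ω' => (auxWhigh Z (k : ℕ) ω', Z' k ω')).map Prod.fst := by
      rw [Measure.map_map measurable_fst ((measurable_auxWhigh Z hZ _).prodMk (hZ' k))]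
      rfl
    have hstrong1 : AEStronglyMeasurable
        (fun w : (∀ i : {i : Fin n // ¬(i : ℕ) < (k : ℕ)}, 𝒵 i) =>
          f (auxGlue (k : ℕ) (auxXlow Z (k : ℕ) ω) w))
        ((P.map fun ω' => (auxWhigh Z (k : ℕ) ω', Z' k ω')).map Prod.fst) :=
      (hf.comp (measurable_auxGlue_right _ _)).aestronglyMeasurable
    rw [hcomp, integral_map measurable_fst.aemeasurable hstrong1]
  rw [hR]
  -- law of W_k as image of (Z_k, W_{k+1})
  have hWlaw : P.map (auxWhigh Z (k : ℕ))
      = (P.map (fun ω' => (Z k ω', auxWhigh Z ((k : ℕ) + 1) ω'))).map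
          (fun r : 𝒵 k × (∀ i : {i : Fin n // ¬(i : ℕ) < (k : ℕ) + 1}, 𝒵 i) =>
            auxExt k r.1 r.2) := by
    rw [Measure.map_map (measurable_auxExt k) ((hZ k).prodMk (measurable_auxWhigh Z hZ _))]
    congr 1
    funext ω'
    show auxWhigh Z (k : ℕ) ω' = auxExt k (Z k ω') (auxWhigh Z ((k : ℕ) + 1) ω')
    exact auxWhigh_eq_ext Z k ω'
  have hstrong2 : AEStronglyMeasurable
      (fun w : (∀ i : {i : Fin n // ¬(i : ℕ) < (k : ℕ)}, 𝒵 i) =>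
        f (auxGlue (k : ℕ) (auxXlow Z (k : ℕ) ω) w))
      ((P.map (fun ω' => (Z k ω', auxWhigh Z ((k : ℕ) + 1) ω'))).map
        (fun r : 𝒵 k × (∀ i : {i : Fin n // ¬(i : ℕ) < (k : ℕ) + 1}, 𝒵 i) =>
          auxExt k r.1 r.2)) :=
    (hf.comp (measurable_auxGlue_right _ _)).aestronglyMeasurable
  rw [hWlaw, integral_map (measurable_auxExt k).aemeasurable hstrong2,
    aux_law_ZW hindep hZ hZ' hcopy k]
  -- now both sides are integrals over product measures related by swap
  rw [← integral_prod_swap]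
  rfl

end JensenL

/-! ### The martingale increments and the inductive bound -/

noncomputable def auxq (P : Measure Ω) (Z Z' : ∀ i : Fin n, Ω → 𝒵 i)
    (f : (∀ i, 𝒵 i) → ℝ) (l : ℝ) (k : Fin n) : Ω → ℝ :=
  P[fun ω' => l * (f (sampleDep Z ω') - f (sampleRepDep Z Z' k ω'))
      - l ^ 2 / 2 * (f (sampleDep Z ω') - f (sampleRepDep Z Z' k ω')) ^ 2 |
    filtDep Z ((k : ℕ) + 1)]

noncomputable def auxqq (P : Measure Ω) (Z Z' : ∀ i : Fin n, Ω → 𝒵 i)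
    (f : (∀ i, 𝒵 i) → ℝ) (l : ℝ) (j : ℕ) : Ω → ℝ :=
  if h : j < n then auxq P Z Z' f l ⟨j, h⟩ else 0

noncomputable def auxA (P : Measure Ω) (Z Z' : ∀ i : Fin n, Ω → 𝒵 i)
    (f : (∀ i, 𝒵 i) → ℝ) (l : ℝ) (m : ℕ) : Ω → ℝ :=
  fun ω => ∑ j ∈ Finset.range m, auxqq P Z Z' f l j ω

section MainInduction

variable {P : Measure Ω} [IsProbabilityMeasure P] {Z Z' : ∀ i : Fin n, Ω → 𝒵 i}

variable (hindep : iIndepFun (β := Sum.elim 𝒵 𝒵)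
      (m := fun x => Sum.rec (motive := fun x => MeasurableSpace (Sum.elim 𝒵 𝒵 x))
        (fun i => (inferInstance : MeasurableSpace (𝒵 i)))
        (fun i => (inferInstance : MeasurableSpace (𝒵 i))) x)
      (fun x => Sum.rec (motive := fun x => Ω → Sum.elim 𝒵 𝒵 x) Z Z' x) P)
  (hZ : ∀ i, Measurable (Z i)) (hZ' : ∀ i, Measurable (Z' i))
  (hcopy : ∀ i, IdentDistrib (Z' i) (Z i) P P)
  {f : (∀ i, 𝒵 i) → ℝ} (hf : Measurable f)
  (hsq : MemLp (fun ω => f (sampleDep Z ω)) 2 P) (l : ℝ)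

omit hindep hZ' hcopy in
include hZ in
lemma aux_A_SM (m : ℕ) : StronglyMeasurable[filtDep Z m] (auxA P Z Z' f l m) := by
  induction m with
  | zero =>
    have : auxA P Z Z' f l 0 = fun _ => 0 := by
      funext ω; simp [auxA]
    rw [this]
    exact stronglyMeasurable_const
  | succ m ih =>
    have : auxA P Z Z' f l (m + 1)
        = fun ω => auxA P Z Z' f l m ω + auxqq P Z Z' f l m ω := by
      funext ω; simp [auxA, Finset.sum_range_succ]
    rw [this]
    refine StronglyMeasurable.add (ih.mono (filtDep_mono Z (Nat.le_succ m))) ?_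
    rw [auxqq]
    split
    · exact stronglyMeasurable_condExp.mono (filtDep_mono Z (by simp))
    · exact stronglyMeasurable_const

include hindep hZ hZ' hcopy hf hsq in
lemma aux_qq_le (j : ℕ) : auxqq P Z Z' f l j ≤ᵐ[P] fun _ => (1 : ℝ) / 2 := by
  rw [auxqq]
  split
  · rename_i h
    have hint := aux_g_int hindep hZ hZ' hcopy hf hsq ⟨j, h⟩ l
    have hhalf := condExp_mono (m := filtDep Z (j + 1)) hint (integrable_const ((1 : ℝ) / 2))
      (ae_of_all _ fun ω => aux_half l _)
    refine hhalf.trans (Filter.EventuallyEq.le (Filter.EventuallyEq.of_eq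
      (condExp_const (μ := P) (filtDep_le Z hZ (j + 1)) ((1 : ℝ) / 2))))
  · exact ae_of_all _ fun ω => by norm_num

include hindep hZ hZ' hcopy hf hsq in
lemma aux_expA_le (m : ℕ) :
    ∀ᵐ ω ∂P, Real.exp (auxA P Z Z' f l m ω) ≤ Real.exp ((m : ℝ) / 2) := by
  have h : ∀ᵐ ω ∂P, ∀ j ∈ Finset.range m, auxqq P Z Z' f l j ω ≤ 1 / 2 := by
    refine (Filter.eventually_all_finite (Set.finite_coe_iff.mp ?_)).mpr ?_
    · exact (Finset.finite_toSet _).to_subtype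
    · intro j _
      exact aux_qq_le hindep hZ hZ' hcopy hf hsq l j
  filter_upwards [h] with ω hω
  rw [Real.exp_le_exp]
  calc auxA P Z Z' f l m ω ≤ ∑ j ∈ Finset.range m, (1 : ℝ) / 2 :=
        Finset.sum_le_sum hω
    _ = (m : ℝ) / 2 := by simp; ring

include hindep hZ hZ' hcopy hf hsq in
lemma aux_expA_int (m : ℕ) :
    Integrable (fun ω => Real.exp (auxA P Z Z' f l m ω)) P := by
  refine Integrable.mono' (integrable_const (Real.exp ((m : ℝ) / 2)))
    (Continuous.comp_stronglyMeasurable Real.continuous_exp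
      ((aux_A_SM hZ l m).mono (filtDep_le Z hZ m))).aestronglyMeasurable ?_
  filter_upwards [aux_expA_le hindep hZ hZ' hcopy hf hsq l m] with ω hω
  rw [Real.norm_eq_abs, abs_of_nonneg (Real.exp_pos _).le]
  exact hω

end MainInduction

section MainInduction2

variable {P : Measure Ω} [IsProbabilityMeasure P] {Z Z' : ∀ i : Fin n, Ω → 𝒵 i}

variable (hindep : iIndepFun (β := Sum.elim 𝒵 𝒵)
      (m := fun x => Sum.rec (motive := fun x => MeasurableSpace (Sum.elim 𝒵 𝒵 x))
        (fun i => (inferInstance : MeasurableSpace (𝒵 i)))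
        (fun i => (inferInstance : MeasurableSpace (𝒵 i))) x)
      (fun x => Sum.rec (motive := fun x => Ω → Sum.elim 𝒵 𝒵 x) Z Z' x) P)
  (hZ : ∀ i, Measurable (Z i)) (hZ' : ∀ i, Measurable (Z' i))
  (hcopy : ∀ i, IdentDistrib (Z' i) (Z i) P P)
  {f : (∀ i, 𝒵 i) → ℝ} (hf : Measurable f)
  (hsq : MemLp (fun ω => f (sampleDep Z ω)) 2 P) (l : ℝ)

include hindep hZ hZ' hcopy hf hsq in
lemma aux_IB (m : ℕ) : ∫ ω, Real.exp (auxA P Z Z' f l m ω) ∂P ≤ 1 := by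
  induction m with
  | zero =>
    have h0 : (fun ω => Real.exp (auxA P Z Z' f l 0 ω)) = fun _ => (1 : ℝ) := by
      funext ω; simp [auxA]
    rw [h0, integral_const]
    simp
  | succ m ih =>
    by_cases h : m < n
    · -- main case
      set k : Fin n := ⟨m, h⟩ with hk
      set g : Ω → ℝ := fun ω' => l * (f (sampleDep Z ω') - f (sampleRepDep Z Z' k ω'))
        - l ^ 2 / 2 * (f (sampleDep Z ω') - f (sampleRepDep Z Z' k ω')) ^ 2 with hg
      set expg : Ω → ℝ := fun ω' => Real.exp (l * (f (sampleDep Z ω')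
        - f (sampleRepDep Z Z' k ω')) - l ^ 2 / 2 * (f (sampleDep Z ω')
        - f (sampleRepDep Z Z' k ω')) ^ 2) with hexpg
      set B : Ω → ℝ := fun ω => Real.exp (auxA P Z Z' f l m ω) with hB
      have hmg : Measurable g := by
        have mS := measurable_sampleDep Z hZ
        have mR := measurable_sampleRepDep hZ hZ' k
        exact (((hf.comp mS).sub (hf.comp mR)).const_mul l).sub
          ((((hf.comp mS).sub (hf.comp mR)).pow_const 2).const_mul (l ^ 2 / 2))
      have hmexpg : Measurable expg := Real.measurable_exp.comp hmg
      have hexpg_le : ∀ ω', expg ω' ≤ Real.exp (1 / 2) := fun ω' =>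
        Real.exp_le_exp.mpr (aux_half l _)
      have hexpg_nonneg : ∀ ω', 0 ≤ expg ω' := fun ω' => (Real.exp_pos _).le
      have hexpg_int : Integrable expg P := by
        refine Integrable.mono' (integrable_const (Real.exp (1 / 2)))
          hmexpg.aestronglyMeasurable (ae_of_all _ fun ω' => ?_)
        rw [Real.norm_eq_abs, abs_of_nonneg (hexpg_nonneg ω')]
        exact hexpg_le ω'
      -- strong measurability of B at levels m and m+1
      have hB_SM : StronglyMeasurable[filtDep Z m] B :=
        Real.continuous_exp.comp_stronglyMeasurable (aux_A_SM hZ l m)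
      have hB_SM' : StronglyMeasurable[filtDep Z (m + 1)] B :=
        hB_SM.mono (filtDep_mono Z (Nat.le_succ m))
      have hB_le := aux_expA_le hindep hZ hZ' hcopy hf hsq l m
      have hB_pos : ∀ ω, 0 < B ω := fun ω => Real.exp_pos _
      have hB_int : Integrable B P := aux_expA_int hindep hZ hZ' hcopy hf hsq l m
      -- conditional expectations of expg
      have hR_nonneg : (fun _ => (0 : ℝ)) ≤ᵐ[P] P[expg | filtDep Z (m + 1)] :=
        condExp_nonneg (ae_of_all _ fun ω' => hexpg_nonneg ω')
      have hR_le : P[expg | filtDep Z (m + 1)] ≤ᵐ[P] fun _ => Real.exp (1 / 2) :=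
        (condExp_mono hexpg_int (integrable_const _) (ae_of_all _ hexpg_le)).trans
          (Filter.EventuallyEq.le (Filter.EventuallyEq.of_eq
            (condExp_const (μ := P) (filtDep_le Z hZ (m + 1)) _)))
      have hRm_nonneg : (fun _ => (0 : ℝ)) ≤ᵐ[P] P[expg | filtDep Z m] :=
        condExp_nonneg (ae_of_all _ fun ω' => hexpg_nonneg ω')
      have hRm_le : P[expg | filtDep Z m] ≤ᵐ[P] fun _ => Real.exp (1 / 2) :=
        (condExp_mono hexpg_int (integrable_const _) (ae_of_all _ hexpg_le)).trans
          (Filter.EventuallyEq.le (Filter.EventuallyEq.of_eq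
            (condExp_const (μ := P) (filtDep_le Z hZ m) _)))
      -- integrability of products
      have hBexpg_int : Integrable (B * expg) P := by
        refine Integrable.mono' (integrable_const (Real.exp ((m : ℝ) / 2) * Real.exp (1 / 2)))
          ((hB_SM.mono (filtDep_le Z hZ m)).mul
            hmexpg.stronglyMeasurable).aestronglyMeasurable ?_
        filter_upwards [hB_le] with ω hω
        rw [Pi.mul_apply, Real.norm_eq_abs, abs_mul, abs_of_nonneg (hB_pos ω).le,
          abs_of_nonneg (hexpg_nonneg ω)]
        exact mul_le_mul hω (hexpg_le ω) (hexpg_nonneg ω) (Real.exp_pos _).le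
      have hBR_int : Integrable (fun ω => B ω * (P[expg | filtDep Z (m + 1)]) ω) P := by
        refine Integrable.mono' (integrable_const (Real.exp ((m : ℝ) / 2) * Real.exp (1 / 2)))
          ((hB_SM.mono (filtDep_le Z hZ m)).mul
            (stronglyMeasurable_condExp.mono (filtDep_le Z hZ (m + 1)))).aestronglyMeasurable ?_
        filter_upwards [hB_le, hR_le, hR_nonneg] with ω h1 h2 h3
        rw [Real.norm_eq_abs, abs_mul, abs_of_nonneg (hB_pos ω).le, abs_of_nonneg h3]
        exact mul_le_mul h1 h2 h3 (Real.exp_pos _).le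
      have hBRm_int : Integrable (fun ω => B ω * (P[expg | filtDep Z m]) ω) P := by
        refine Integrable.mono' (integrable_const (Real.exp ((m : ℝ) / 2) * Real.exp (1 / 2)))
          ((hB_SM.mono (filtDep_le Z hZ m)).mul
            (stronglyMeasurable_condExp.mono (filtDep_le Z hZ m))).aestronglyMeasurable ?_
        filter_upwards [hB_le, hRm_le, hRm_nonneg] with ω h1 h2 h3
        rw [Real.norm_eq_abs, abs_mul, abs_of_nonneg (hB_pos ω).le, abs_of_nonneg h3]
        exact mul_le_mul h1 h2 h3 (Real.exp_pos _).le
      -- Step A : rewrite the integrand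
      have hstepA : (fun ω => Real.exp (auxA P Z Z' f l (m + 1) ω))
          = fun ω => B ω * Real.exp (auxq P Z Z' f l k ω) := by
        funext ω
        rw [hB]
        rw [← Real.exp_add]
        congr 1
        simp only [auxA, Finset.sum_range_succ]
        congr 1
        simp only [auxqq, dif_pos h, hk]
      have hint_m1 : Integrable (fun ω => B ω * Real.exp (auxq P Z Z' f l k ω)) P := by
        rw [← hstepA]
        exact aux_expA_int hindep hZ hZ' hcopy hf hsq l (m + 1)
      -- Step B : apply conditional Jensen (aux_J)
      have hJ := aux_J hindep hZ hZ' hcopy hf hsq l k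
      have hle1 : ∫ ω, Real.exp (auxA P Z Z' f l (m + 1) ω) ∂P
          ≤ ∫ ω, B ω * (P[expg | filtDep Z (m + 1)]) ω ∂P := by
        rw [hstepA]
        refine integral_mono_ae hint_m1 hBR_int ?_
        filter_upwards [hJ] with ω hω
        exact mul_le_mul_of_nonneg_left hω (hB_pos ω).le
      -- Step C : pull out B at level m+1 and use tower property
      have hpull1 := condExp_mul_of_stronglyMeasurable_left (μ := P) hB_SM' hBexpg_int hexpg_int
      have hstepC : ∫ ω, B ω * (P[expg | filtDep Z (m + 1)]) ω ∂P
          = ∫ ω, B ω * expg ω ∂P := by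
        have h1 : ∫ ω, B ω * (P[expg | filtDep Z (m + 1)]) ω ∂P
            = ∫ ω, (P[B * expg | filtDep Z (m + 1)]) ω ∂P :=
          integral_congr_ae (Filter.EventuallyEq.symm hpull1)
        rw [h1, integral_condExp (filtDep_le Z hZ (m + 1))]
        rfl
      -- Step D : pull out B at level m
      have hpull2 := condExp_mul_of_stronglyMeasurable_left (μ := P) hB_SM hBexpg_int hexpg_int
      have hstepD : ∫ ω, B ω * expg ω ∂P
          = ∫ ω, B ω * (P[expg | filtDep Z m]) ω ∂P := by
        have h1 : ∫ ω, B ω * expg ω ∂P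
            = ∫ ω, (P[B * expg | filtDep Z m]) ω ∂P := by
          rw [integral_condExp (filtDep_le Z hZ m)]
          rfl
        rw [h1]
        exact integral_congr_ae hpull2
      -- Step E : apply the symmetrization bound (aux_K)
      have hK := aux_K hindep hZ hZ' hcopy hf l k
      have hstepE : ∫ ω, B ω * (P[expg | filtDep Z m]) ω ∂P ≤ ∫ ω, B ω ∂P := by
        refine integral_mono_ae hBRm_int hB_int ?_
        filter_upwards [hK] with ω hω
        calc B ω * (P[expg | filtDep Z m]) ω ≤ B ω * 1 :=
              mul_le_mul_of_nonneg_left hω (hB_pos ω).le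
          _ = B ω := mul_one _
      calc ∫ ω, Real.exp (auxA P Z Z' f l (m + 1) ω) ∂P
          ≤ ∫ ω, B ω * (P[expg | filtDep Z (m + 1)]) ω ∂P := hle1
        _ = ∫ ω, B ω * expg ω ∂P := hstepC
        _ = ∫ ω, B ω * (P[expg | filtDep Z m]) ω ∂P := hstepD
        _ ≤ ∫ ω, B ω ∂P := hstepE
        _ ≤ 1 := ih
    · -- trivial case : `m ≥ n`
      have heq : auxA P Z Z' f l (m + 1) = auxA P Z Z' f l m := by
        funext ω
        simp only [auxA, Finset.sum_range_succ, auxqq, dif_neg h, Pi.zero_apply, add_zero]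
      rw [heq]
      exact ih

end MainInduction2

section Telescope

variable {P : Measure Ω} [IsProbabilityMeasure P] {Z Z' : ∀ i : Fin n, Ω → 𝒵 i}

variable (hindep : iIndepFun (β := Sum.elim 𝒵 𝒵)
      (m := fun x => Sum.rec (motive := fun x => MeasurableSpace (Sum.elim 𝒵 𝒵 x))
        (fun i => (inferInstance : MeasurableSpace (𝒵 i)))
        (fun i => (inferInstance : MeasurableSpace (𝒵 i))) x)
      (fun x => Sum.rec (motive := fun x => Ω → Sum.elim 𝒵 𝒵 x) Z Z' x) P)
  (hZ : ∀ i, Measurable (Z i)) (hZ' : ∀ i, Measurable (Z' i))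
  (hcopy : ∀ i, IdentDistrib (Z' i) (Z i) P P)
  {f : (∀ i, 𝒵 i) → ℝ} (hf : Measurable f)
  (hsq : MemLp (fun ω => f (sampleDep Z ω)) 2 P) (l : ℝ)

include hindep hZ hZ' hcopy hf hsq in
lemma aux_sum_q :
    (fun ω => ∑ k : Fin n, auxq P Z Z' f l k ω)
      =ᵐ[P] fun ω => l * gapDep P Z f ω - l ^ 2 / 2 * varEstDep P Z Z' f ω := by
  set φ : ℕ → Ω → ℝ := fun m => P[fun ω => f (sampleDep Z ω) | filtDep Z m] with hφ
  have hint_S : Integrable (fun ω => f (sampleDep Z ω)) P := hsq.integrable one_le_two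
  -- per-k identification
  have hterm : ∀ k : Fin n, auxq P Z Z' f l k
      =ᵐ[P] fun ω => l * (φ ((k : ℕ) + 1) ω - φ (k : ℕ) ω)
        - l ^ 2 / 2 * (P[fun ω' => (f (sampleDep Z ω') - f (sampleRepDep Z Z' k ω')) ^ 2 |
            filtDep Z ((k : ℕ) + 1)]) ω := by
    intro k
    have hY : MemLp (fun ω => f (sampleDep Z ω) - f (sampleRepDep Z Z' k ω)) 2 P :=
      aux_Y_memLp hindep hZ hZ' hcopy hf hsq k
    have hY_int : Integrable (fun ω => f (sampleDep Z ω) - f (sampleRepDep Z Z' k ω)) P :=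
      hY.integrable one_le_two
    have hY2_int : Integrable (fun ω => (f (sampleDep Z ω) - f (sampleRepDep Z Z' k ω)) ^ 2) P :=
      hY.integrable_sq
    have hR_int : Integrable (fun ω => f (sampleRepDep Z Z' k ω)) P :=
      (aux_memLp_rep hindep hZ hZ' hcopy hf hsq k).integrable one_le_two
    have e0 : (fun ω' => l * (f (sampleDep Z ω') - f (sampleRepDep Z Z' k ω'))
        - l ^ 2 / 2 * (f (sampleDep Z ω') - f (sampleRepDep Z Z' k ω')) ^ 2)
        = (l • fun ω' => f (sampleDep Z ω') - f (sampleRepDep Z Z' k ω'))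
          - ((l ^ 2 / 2) • fun ω' => (f (sampleDep Z ω') - f (sampleRepDep Z Z' k ω')) ^ 2) :=
      rfl
    have h1 : auxq P Z Z' f l k
        =ᵐ[P] P[(l • fun ω' => f (sampleDep Z ω') - f (sampleRepDep Z Z' k ω')) |
            filtDep Z ((k : ℕ) + 1)]
          - P[((l ^ 2 / 2) • fun ω' => (f (sampleDep Z ω') - f (sampleRepDep Z Z' k ω')) ^ 2) |
            filtDep Z ((k : ℕ) + 1)] := by
      rw [auxq, e0]
      exact condExp_sub (hY_int.smul l) (hY2_int.smul (l ^ 2 / 2)) _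
    have h2 := condExp_smul (μ := P) (m := filtDep Z ((k : ℕ) + 1)) l
      (fun ω' => f (sampleDep Z ω') - f (sampleRepDep Z Z' k ω'))
    have h3 := condExp_smul (μ := P) (m := filtDep Z ((k : ℕ) + 1)) (l ^ 2 / 2)
      (fun ω' => (f (sampleDep Z ω') - f (sampleRepDep Z Z' k ω')) ^ 2)
    have e1 : (fun ω' => f (sampleDep Z ω') - f (sampleRepDep Z Z' k ω'))
        = (fun ω' => f (sampleDep Z ω')) - (fun ω' => f (sampleRepDep Z Z' k ω')) := rfl
    have h4 : P[(fun ω' => f (sampleDep Z ω') - f (sampleRepDep Z Z' k ω')) |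
        filtDep Z ((k : ℕ) + 1)]
        =ᵐ[P] P[(fun ω' => f (sampleDep Z ω')) | filtDep Z ((k : ℕ) + 1)]
          - P[(fun ω' => f (sampleRepDep Z Z' k ω')) | filtDep Z ((k : ℕ) + 1)] := by
      rw [e1]
      exact condExp_sub hint_S hR_int _
    have h5 := aux_L hindep hZ hZ' hcopy hf hsq k
    filter_upwards [h1, h2, h3, h4, h5] with ω w1 w2 w3 w4 w5
    rw [w1]
    simp only [Pi.sub_apply]
    rw [w2, w3]
    simp only [Pi.smul_apply, smul_eq_mul]
    rw [w4]
    simp only [Pi.sub_apply]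
    rw [w5]
  -- combine
  have hall : ∀ᵐ ω ∂P, ∀ k ∈ (Finset.univ : Finset (Fin n)), auxq P Z Z' f l k ω
      = l * (φ ((k : ℕ) + 1) ω - φ (k : ℕ) ω)
        - l ^ 2 / 2 * (P[fun ω' => (f (sampleDep Z ω') - f (sampleRepDep Z Z' k ω')) ^ 2 |
            filtDep Z ((k : ℕ) + 1)]) ω := by
    refine (Filter.eventually_all_finite (Finset.finite_toSet _)).mpr ?_
    intro k _
    exact hterm k
  -- endpoint identifications
  have hSM : StronglyMeasurable[filtDep Z n] (fun ω => f (sampleDep Z ω)) := by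
    have hsm : Measurable[filtDep Z n] (sampleDep Z) := by
      rw [measurable_iff_comap_le]
      show MeasurableSpace.comap (sampleDep Z) MeasurableSpace.pi ≤ _
      rw [MeasurableSpace.pi, MeasurableSpace.comap_iSup]
      simp only [MeasurableSpace.comap_comp]
      exact iSup_le fun i => le_iSup_of_le i (le_iSup_of_le i.isLt le_rfl)
    have h2 : StronglyMeasurable[filtDep Z n] (f ∘ sampleDep Z) :=
      (hf.comp hsm).stronglyMeasurable
    exact h2
  have hφn : φ n = fun ω => f (sampleDep Z ω) :=
    condExp_of_stronglyMeasurable (filtDep_le Z hZ n) hSM hint_S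
  have hφ0 : φ 0 = fun _ => ∫ ω', f (sampleDep Z ω') ∂P := by
    rw [hφ]
    show P[fun ω => f (sampleDep Z ω) | filtDep Z 0] = _
    rw [filtDep_zero]
    exact condExp_bot _
  filter_upwards [hall] with ω hω
  rw [Finset.sum_congr rfl (hω)]
  rw [Finset.sum_sub_distrib, ← Finset.mul_sum, ← Finset.mul_sum]
  have htel : ∑ k : Fin n, (φ ((k : ℕ) + 1) ω - φ (k : ℕ) ω)
      = φ n ω - φ 0 ω := by
    rw [Fin.sum_univ_eq_sum_range (fun j => φ (j + 1) ω - φ j ω) n]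
    exact Finset.sum_range_sub (fun j => φ j ω) n
  rw [htel, hφn, hφ0]
  rw [gapDep, varEstDep]

end Telescope

/-- In the heterogeneous setting, `(Δ, √V)` is a canonical pair:
for every `λ ∈ ℝ`, `E[exp(λ·Δ − (λ²/2)·V)] ≤ 1`. -/
theorem gap_varEst_canonical_pair_heterogeneous
    (P : Measure Ω) [IsProbabilityMeasure P]
    (Z Z' : ∀ i : Fin n, Ω → 𝒵 i)
    (hZ : ∀ i, Measurable (Z i)) (hZ' : ∀ i, Measurable (Z' i))
    (hindep : iIndepFun (β := Sum.elim 𝒵 𝒵)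
      (m := fun x => Sum.rec (motive := fun x => MeasurableSpace (Sum.elim 𝒵 𝒵 x))
        (fun i => (inferInstance : MeasurableSpace (𝒵 i)))
        (fun i => (inferInstance : MeasurableSpace (𝒵 i))) x)
      (fun x => Sum.rec (motive := fun x => Ω → Sum.elim 𝒵 𝒵 x) Z Z' x) P)
    (hcopy : ∀ i, IdentDistrib (Z' i) (Z i) P P)
    (f : (∀ i, 𝒵 i) → ℝ) (hf : Measurable f)
    (hsq : MemLp (fun ω => f (sampleDep Z ω)) 2 P)
    (l : ℝ) :
    ∫⁻ ω, ENNReal.ofReal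
        (Real.exp (l * gapDep P Z f ω - l ^ 2 / 2 * varEstDep P Z Z' f ω)) ∂P ≤ 1 := by
  have hsum := aux_sum_q hindep hZ hZ' hcopy hf hsq l
  have hfin : (fun ω => ∑ k : Fin n, auxq P Z Z' f l k ω) = auxA P Z Z' f l n := by
    funext ω
    show _ = ∑ j ∈ Finset.range n, auxqq P Z Z' f l j ω
    rw [← Fin.sum_univ_eq_sum_range (fun j => auxqq P Z Z' f l j ω) n]
    refine Finset.sum_congr rfl fun k _ => ?_
    rw [auxqq, dif_pos k.isLt]
  have hbound := aux_IB hindep hZ hZ' hcopy hf hsq l n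
  have hint := aux_expA_int hindep hZ hZ' hcopy hf hsq l n
  have hcong : ∀ᵐ ω ∂P, ENNReal.ofReal
      (Real.exp (l * gapDep P Z f ω - l ^ 2 / 2 * varEstDep P Z Z' f ω))
      = ENNReal.ofReal (Real.exp (auxA P Z Z' f l n ω)) := by
    filter_upwards [hsum] with ω hω
    rw [← hω, congrFun hfin ω]
  rw [lintegral_congr_ae hcong,
    ← ofReal_integral_eq_lintegral_ofReal hint (ae_of_all _ fun ω => (Real.exp_pos _).le)]
  exact ENNReal.ofReal_le_one.mpr hbound
end
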